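/- arXiv:1812.03499 — 12 statements merged into one kernel-verified Lean document; each statement's English description precedes it below -/
import Mathlib

section
/- Let T be a bounded linear operator on a complex Hilbert space H with canonical polar decomposition T = V|T| (where V is the partial isometry with N(V) = N(T)), and let T̂ = (1/2)(V|T| + |T|V) be the mean transform of T. Then the kernel of T̂ equals the kernel of T. In particular, T̂ = 0 if and only if T = 0. -/
open ContinuousLinearMap Filter Topology

local notation "⟪" x ", " y "⟫" => @inner ℂ _ _ x y

section aux
variable {H : Type*} [NormedAddCommGroup H] [InnerProductSpace ℂ H] [CompleteSpace H]

lemma pos_apply_eq_zero {R : H →L[ℂ] H} (hR : R.IsPositive) {x : H}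
    (h : RCLike.re ⟪R x, x⟫ = 0) : R x = 0 := by
  have hsymm : (R : H →ₗ[ℂ] H).IsSymmetric :=
    isSelfAdjoint_iff_isSymmetric.mp hR.isSelfAdjoint
  set a : ℝ := ‖R x‖ ^ 2 with ha
  set c : ℝ := RCLike.re ⟪R (R x), R x⟫ with hc
  have hc0 : 0 ≤ c := hR.re_inner_nonneg_left (R x)
  have quad : ∀ t : ℝ, 0 ≤ 2 * t * a + t ^ 2 * c := by
    intro t
    have h0 := hR.re_inner_nonneg_left (x + (t : ℂ) • R x)
    have hexp : ⟪R (x + (t : ℂ) • R x), x + (t : ℂ) • R x⟫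
        = ⟪R x, x⟫ + (t : ℂ) * ⟪R x, R x⟫ + (t : ℂ) * ⟪R (R x), x⟫
          + (t : ℂ) * (t : ℂ) * ⟪R (R x), R x⟫ := by
      simp only [map_add, map_smul, inner_add_left, inner_add_right, inner_smul_left,
        inner_smul_right, Complex.conj_ofReal]
      ring
    have hRR : ⟪R (R x), x⟫ = ⟪R x, R x⟫ := hsymm (R x) x
    have hnorm : RCLike.re ⟪R x, R x⟫ = a := by
      rw [ha, inner_self_eq_norm_sq]
    rw [hexp, hRR] at h0
    simp only [map_add, RCLike.mul_re, Complex.ofReal_re, Complex.ofReal_im] at h0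
    simp only [RCLike.re_to_complex, RCLike.im_to_complex] at h0 hnorm h ⊢
    rw [hnorm, h] at h0
    have him : (⟪R x, R x⟫ : ℂ).im = 0 := by
      rw [← Complex.conj_eq_iff_im, inner_conj_symm]
    have him2 : (⟪R (R x), R x⟫ : ℂ).im = 0 := by
      rw [← Complex.conj_eq_iff_im]
      exact hsymm.conj_inner_sym (R x) (R x)
    rw [him] at h0
    simp only [Complex.mul_im, Complex.ofReal_re, Complex.ofReal_im] at h0
    have hc' : (⟪R (R x), R x⟫ : ℂ).re = c := rfl
    rw [him2, hc'] at h0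
    ring_nf at h0 ⊢
    linarith [h0]
  have ha0 : 0 ≤ a := sq_nonneg _
  have hc1 : (0:ℝ) < c + 1 := by linarith
  have key := quad (-(a / (c + 1)))
  have haz : a = 0 := by
    have key2 : 0 ≤ (2 * (-(a / (c + 1))) * a + (-(a / (c + 1))) ^ 2 * c) * (c + 1) ^ 2 :=
      mul_nonneg key (sq_nonneg _)
    have e : (2 * (-(a / (c + 1))) * a + (-(a / (c + 1))) ^ 2 * c) * (c + 1) ^ 2
        = -(a ^ 2 * (c + 2)) := by
      field_simp
      ring
    rw [e] at key2
    nlinarith [key2]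
  have : ‖R x‖ = 0 := by
    have := haz
    rw [ha] at this
    nlinarith [norm_nonneg (R x)]
  simpa using this

end aux

structure PolarDecomp {H : Type*} [NormedAddCommGroup H] [InnerProductSpace ℂ H]
    [CompleteSpace H] (T : H →L[ℂ] H) where
  V : H →L[ℂ] H
  R : H →L[ℂ] H
  posR : R.IsPositive
  sqR : R * R = adjoint T * T
  partIso : V * adjoint V * V = V
  kerV : LinearMap.ker (V : H →ₗ[ℂ] H) = LinearMap.ker (T : H →ₗ[ℂ] H)
  factor : T = V * R

noncomputable def PolarDecomp.mean {H : Type*} [NormedAddCommGroup H] [InnerProductSpace ℂ H]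
    [CompleteSpace H] {T : H →L[ℂ] H} (P : PolarDecomp T) : H →L[ℂ] H :=
  (2⁻¹ : ℂ) • (P.V * P.R + P.R * P.V)

theorem mean_transform_ker {H : Type*} [NormedAddCommGroup H] [InnerProductSpace ℂ H]
    [CompleteSpace H] (T : H →L[ℂ] H) (P : PolarDecomp T) :
    LinearMap.ker (P.mean : H →ₗ[ℂ] H) = LinearMap.ker (T : H →ₗ[ℂ] H) ∧ (P.mean = 0 ↔ T = 0) := by
  obtain ⟨V, R, posR, sqR, partIso, kerV, factor⟩ := P
  simp only [PolarDecomp.mean]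
  have hsymm : (R : H →ₗ[ℂ] H).IsSymmetric :=
    isSelfAdjoint_iff_isSymmetric.mp posR.isSelfAdjoint
  -- ker T = ker R pointwise
  have hTR : ∀ x : H, T x = 0 ↔ R x = 0 := by
    intro x
    have h1 : ⟪T x, T x⟫ = ⟪R x, R x⟫ := by
      calc ⟪T x, T x⟫ = ⟪(adjoint T) (T x), x⟫ := by rw [adjoint_inner_left]
        _ = ⟪(adjoint T * T) x, x⟫ := rfl
        _ = ⟪(R * R) x, x⟫ := by rw [sqR]
        _ = ⟪R (R x), x⟫ := rfl
        _ = ⟪R x, R x⟫ := hsymm (R x) x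
    constructor
    · intro h
      have : ⟪R x, R x⟫ = 0 := by rw [← h1, h, inner_zero_left]
      exact inner_self_eq_zero.mp this
    · intro h
      have : ⟪T x, T x⟫ = 0 := by rw [h1, h, inner_zero_left]
      exact inner_self_eq_zero.mp this
  -- ker V = ker R pointwise
  have hVR : ∀ x : H, V x = 0 ↔ R x = 0 := by
    intro x
    rw [← hTR]
    constructor
    · intro h; exact (LinearMap.mem_ker).mp (kerV ▸ (LinearMap.mem_ker).mpr h)
    · intro h; exact (LinearMap.mem_ker).mp (kerV.symm ▸ (LinearMap.mem_ker).mpr h)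
  -- V† V R = R
  have hproj : ∀ y : H, (adjoint V) (V (R y)) = R y := by
    intro y
    have hVw : V (R y - (adjoint V) (V (R y))) = 0 := by
      have := congrArg (fun (A : H →L[ℂ] H) => A (R y)) partIso
      simp only [ContinuousLinearMap.mul_apply] at this
      simp [map_sub, this]
    have hRw : R (R y - (adjoint V) (V (R y))) = 0 :=
      (hVR (R y - (adjoint V) (V (R y)))).mp hVw
    have h1 : ⟪R y - (adjoint V) (V (R y)), R y⟫ = 0 := by
      rw [← hsymm.apply_clm (R y - (adjoint V) (V (R y))) y, hRw, inner_zero_left]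
    have h2 : ⟪R y - (adjoint V) (V (R y)), (adjoint V) (V (R y))⟫ = 0 := by
      rw [adjoint_inner_right, hVw, inner_zero_left]
    have h3 : ⟪R y - (adjoint V) (V (R y)), R y - (adjoint V) (V (R y))⟫ = 0 := by
      rw [inner_sub_right, h1, h2, sub_zero]
    have hw0 : R y - (adjoint V) (V (R y)) = 0 := inner_self_eq_zero.mp h3
    exact (sub_eq_zero.mp hw0).symm
  -- main kernel equality
  have hker : ∀ x : H, ((2⁻¹ : ℂ) • (V * R + R * V)) x = 0 ↔ T x = 0 := by
    intro x
    have happ : ((2⁻¹ : ℂ) • (V * R + R * V)) x = (2⁻¹ : ℂ) • (V (R x) + R (V x)) := rfl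
    constructor
    · intro h
      rw [happ, smul_eq_zero] at h
      have hsum : V (R x) + R (V x) = 0 := by
        rcases h with h | h
        · norm_num at h
        · exact h
      have heq : V (R x) = - R (V x) := by
        rw [eq_neg_iff_add_eq_zero]; exact hsum
      have hRx : R x = - (adjoint V) (R (V x)) := by
        have := congrArg (adjoint V) heq
        rw [hproj x] at this
        rw [this, map_neg]
      have hre : RCLike.re ⟪R x, x⟫ = - RCLike.re ⟪R (V x), V x⟫ := by
        rw [hRx, inner_neg_left, adjoint_inner_left, map_neg]
      have h1 := posR.re_inner_nonneg_left x
      have h2 := posR.re_inner_nonneg_left (V x)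
      have : RCLike.re ⟪R x, x⟫ = 0 := by rw [hre] at h1 ⊢; linarith
      have hR0 : R x = 0 := pos_apply_eq_zero posR this
      rw [hTR, hR0]
    · intro h
      have hR0 : R x = 0 := (hTR x).mp h
      have hV0 : V x = 0 := (hVR x).mpr hR0
      rw [happ, hR0, hV0, map_zero, map_zero, add_zero, smul_zero]
  have hkerEq : LinearMap.ker (((2⁻¹ : ℂ) • (V * R + R * V) : H →L[ℂ] H) : H →ₗ[ℂ] H) = LinearMap.ker (T : H →ₗ[ℂ] H) := by
    ext x
    simp only [LinearMap.mem_ker]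
    exact hker x
  refine ⟨hkerEq, ?_, ?_⟩
  · intro h
    ext x
    have : ((2⁻¹ : ℂ) • (V * R + R * V)) x = 0 := by rw [show ((2⁻¹ : ℂ) • (V * R + R * V) : H →L[ℂ] H) = 0 from h]; rfl
    simpa using (hker x).mp this
  · intro h
    ext x
    have : T x = 0 := by rw [h]; rfl
    simpa using (hker x).mpr this
end

section
/- Let T be a bounded linear operator on a Hilbert space H with mean transform T̂. Then T is invertible if and only if T̂ is invertible and the range of T is closed. -/
open ContinuousLinearMap Filter Topology

section Aux

variable {H : Type*} [NormedAddCommGroup H] [InnerProductSpace ℂ H] [CompleteSpace H]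

local notation "⟪" x ", " y "⟫" => @inner ℂ _ _ x y

lemma aux_isUnit_of_bijective (A : H →L[ℂ] H) (h : Function.Bijective A) : IsUnit A := by
  let e := ContinuousLinearEquiv.ofBijective A ((LinearMap.ker_eq_bot (f := (A : H →ₗ[ℂ] H))).mpr h.1)
    (LinearMap.range_eq_top.mpr h.2)
  exact ⟨e.toUnit, ContinuousLinearEquiv.coe_ofBijective A _ _⟩

lemma aux_selfAdjoint_antilipschitz_isUnit (A : H →L[ℂ] H) (hA : IsSelfAdjoint A)
    {c : NNReal} (hc : AntilipschitzWith c A) : IsUnit A := by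
  have hA' : adjoint A = A := by rw [← star_eq_adjoint]; exact hA
  apply aux_isUnit_of_bijective
  rw [ContinuousLinearMap.bijective_iff_dense_range_and_antilipschitz]
  refine ⟨?_, c, hc⟩
  rw [← Submodule.orthogonal_orthogonal_eq_closure]
  suffices h : (LinearMap.range (A : H →ₗ[ℂ] H))ᗮ = ⊥ by rw [h, Submodule.bot_orthogonal_eq_top]
  rw [Submodule.eq_bot_iff]
  intro y hy
  have h2 : ⟪A (A y), y⟫ = 0 := ((Submodule.mem_orthogonal _ _).mp hy) _ ⟨A y, rfl⟩
  have h3 : ⟪A (A y), y⟫ = ⟪A y, A y⟫ := by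
    calc ⟪A (A y), y⟫ = ⟪A y, adjoint A y⟫ := (adjoint_inner_right A (A y) y).symm
      _ = ⟪A y, A y⟫ := by rw [hA']
  have h4 : A y = 0 := inner_self_eq_zero.mp (h3.symm.trans h2)
  have h5 : A y = A 0 := by simpa using h4
  exact hc.injective h5

lemma aux_norm_R {T : H →L[ℂ] H} (P : PolarDecomp T) (x : H) : ‖P.R x‖ = ‖T x‖ := by
  have hsa : adjoint P.R = P.R := by
    rw [← star_eq_adjoint]; exact P.posR.isSelfAdjoint
  have key : ⟪P.R x, P.R x⟫ = ⟪T x, T x⟫ := by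
    calc ⟪P.R x, P.R x⟫ = ⟪adjoint P.R x, P.R x⟫ := by rw [hsa]
      _ = ⟪x, P.R (P.R x)⟫ := adjoint_inner_left P.R (P.R x) x
      _ = ⟪x, (P.R * P.R) x⟫ := rfl
      _ = ⟪x, adjoint T (T x)⟫ := by rw [P.sqR]; rfl
      _ = ⟪T x, T x⟫ := adjoint_inner_right T x (T x)
  have h2 : ‖P.R x‖ ^ 2 = ‖T x‖ ^ 2 := by
    rw [← inner_self_eq_norm_sq (𝕜 := ℂ), ← inner_self_eq_norm_sq (𝕜 := ℂ), key]
  calc ‖P.R x‖ = Real.sqrt (‖P.R x‖ ^ 2) := (Real.sqrt_sq (norm_nonneg _)).symm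
    _ = Real.sqrt (‖T x‖ ^ 2) := by rw [h2]
    _ = ‖T x‖ := Real.sqrt_sq (norm_nonneg _)

lemma aux_unit_leftinv {A : H →L[ℂ] H} (h : IsUnit A) (x : H) :
    (↑h.unit⁻¹ : H →L[ℂ] H) (A x) = x := by
  calc (↑h.unit⁻¹ : H →L[ℂ] H) (A x) = ((↑h.unit⁻¹ : H →L[ℂ] H) * A) x := rfl
    _ = (1 : H →L[ℂ] H) x := by rw [h.val_inv_mul]
    _ = x := rfl

lemma aux_unit_rightinv {A : H →L[ℂ] H} (h : IsUnit A) (x : H) :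
    A ((↑h.unit⁻¹ : H →L[ℂ] H) x) = x := by
  calc A ((↑h.unit⁻¹ : H →L[ℂ] H) x) = (A * (↑h.unit⁻¹ : H →L[ℂ] H)) x := rfl
    _ = (1 : H →L[ℂ] H) x := by rw [h.mul_val_inv]
    _ = x := rfl

lemma aux_unit_inj {A : H →L[ℂ] H} (h : IsUnit A) : Function.Injective A := by
  intro a b hab
  rw [← aux_unit_leftinv h a, ← aux_unit_leftinv h b, hab]

lemma aux_smul_unit {c : ℂ} (hc : c ≠ 0) {A : H →L[ℂ] H} (h : IsUnit A) : IsUnit (c • A) := by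
  have h1 : IsUnit (c • (1 : H →L[ℂ] H)) := by
    refine ⟨⟨c • 1, c⁻¹ • 1, ?_, ?_⟩, rfl⟩
    · rw [smul_mul_assoc, one_mul, smul_smul, mul_inv_cancel₀ hc, one_smul]
    · rw [smul_mul_assoc, one_mul, smul_smul, inv_mul_cancel₀ hc, one_smul]
  have h2 := h1.mul h
  rwa [smul_mul_assoc, one_mul] at h2

lemma aux_VV {T : H →L[ℂ] H} (P : PolarDecomp T) (hTinj : Function.Injective T) :
    adjoint P.V * P.V = 1 := by
  have hker : LinearMap.ker (P.V : H →ₗ[ℂ] H) = ⊥ := by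
    rw [P.kerV]; exact LinearMap.ker_eq_bot.mpr hTinj
  ext x
  have h0 : P.V ((adjoint P.V * P.V) x - x) = 0 := by
    have h1 := congrArg (fun A : H →L[ℂ] H => A x) P.partIso
    simp only [ContinuousLinearMap.mul_apply] at h1
    simp only [map_sub, ContinuousLinearMap.mul_apply, h1, sub_self]
  have h1 : (adjoint P.V * P.V) x - x ∈ LinearMap.ker (P.V : H →ₗ[ℂ] H) := h0
  rw [hker, Submodule.mem_bot, sub_eq_zero] at h1
  simpa using h1

lemma aux_S_unit {T : H →L[ℂ] H} (P : PolarDecomp T) (hR : IsUnit P.R) :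
    IsUnit (P.R + adjoint P.V * P.R * P.V) := by
  refine (fun (h0 : 0 ≤ P.R) (hab : P.R ≤ P.R + adjoint P.V * P.R * P.V) =>
    CStarAlgebra.isUnit_of_le P.R hab (hR.isStrictlyPositive h0)) ?_ ?_
  · rw [ContinuousLinearMap.nonneg_iff_isPositive]; exact P.posR
  · rw [ContinuousLinearMap.le_def]
    have h1 : (P.R + adjoint P.V * P.R * P.V) - P.R = adjoint P.V * P.R * P.V := by
      abel
    rw [h1]
    exact P.posR.adjoint_conj P.V

lemma aux_R_unit {T : H →L[ℂ] H} (P : PolarDecomp T) {c : NNReal}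
    (hc : ∀ x, ‖x‖ ≤ c * ‖T x‖) : IsUnit P.R := by
  have hb : ∀ x, ‖x‖ ≤ c * ‖P.R x‖ := fun x => by rw [aux_norm_R P x]; exact hc x
  exact aux_selfAdjoint_antilipschitz_isUnit P.R P.posR.isSelfAdjoint (P.R.antilipschitz_of_bound hb)

end Aux

theorem mean_transform_invertible {H : Type*} [NormedAddCommGroup H] [InnerProductSpace ℂ H]
    [CompleteSpace H] (T : H →L[ℂ] H) (P : PolarDecomp T) :
    IsUnit T ↔ (IsUnit P.mean ∧ IsClosed (Set.range fun x => T x)) := by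
  constructor
  · intro hT
    have hsurj : Function.Surjective T := fun y => ⟨(↑hT.unit⁻¹ : H →L[ℂ] H) y,
      aux_unit_rightinv hT y⟩
    have hclosed : IsClosed (Set.range fun x => T x) := by
      rw [Set.range_eq_univ.mpr hsurj]; exact isClosed_univ
    have hTinj : Function.Injective T := aux_unit_inj hT
    have hc : ∀ x, ‖x‖ ≤ ‖(↑hT.unit⁻¹ : H →L[ℂ] H)‖₊ * ‖T x‖ := fun x => by
      calc ‖x‖ = ‖(↑hT.unit⁻¹ : H →L[ℂ] H) (T x)‖ := by rw [aux_unit_leftinv hT x]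
        _ ≤ ‖(↑hT.unit⁻¹ : H →L[ℂ] H)‖ * ‖T x‖ := le_opNorm _ _
        _ = ‖(↑hT.unit⁻¹ : H →L[ℂ] H)‖₊ * ‖T x‖ := by rw [coe_nnnorm]
    have hR : IsUnit P.R := aux_R_unit P hc
    have hV1 : adjoint P.V * P.V = 1 := aux_VV P hTinj
    have hVeq : P.V = T * ↑hR.unit⁻¹ := by
      have h7 := congrArg (fun A : H →L[ℂ] H => A * (↑hR.unit⁻¹ : H →L[ℂ] H)) P.factor
      simp only [mul_assoc] at h7
      rw [show P.R * (↑hR.unit⁻¹ : H →L[ℂ] H) = 1 from hR.mul_val_inv, mul_one] at h7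
      exact h7.symm
    have hV : IsUnit P.V := by rw [hVeq]; exact hT.mul (hR.unit⁻¹).isUnit
    have hV2 : P.V * adjoint P.V = 1 := by
      have h5 : adjoint P.V = ↑hV.unit⁻¹ := by
        calc adjoint P.V = adjoint P.V * (P.V * ↑hV.unit⁻¹) := by
              rw [hV.mul_val_inv, mul_one]
          _ = (adjoint P.V * P.V) * ↑hV.unit⁻¹ := by rw [mul_assoc]
          _ = ↑hV.unit⁻¹ := by rw [hV1, one_mul]
      rw [h5]; exact hV.mul_val_inv
    have hSunit := aux_S_unit P hR
    have hmean : P.mean = (2⁻¹ : ℂ) • (P.V * (P.R + adjoint P.V * P.R * P.V)) := by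
      rw [PolarDecomp.mean, mul_add]
      simp only [← mul_assoc]
      rw [hV2, one_mul]
    have hMunit : IsUnit P.mean := by
      rw [hmean]; exact aux_smul_unit (by norm_num) (hV.mul hSunit)
    exact ⟨hMunit, hclosed⟩
  · rintro ⟨hM, hcl⟩
    have hTinj : Function.Injective T := by
      have hMinj := aux_unit_inj hM
      intro a b hab
      have h0 : T (a - b) = 0 := by rw [map_sub, hab, sub_self]
      have hRz : P.R (a - b) = 0 := by
        have h1 := aux_norm_R P (a - b)
        rw [h0, norm_zero] at h1
        exact norm_eq_zero.mp h1
      have hVz : P.V (a - b) = 0 := by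
        have h1 : a - b ∈ LinearMap.ker (T : H →ₗ[ℂ] H) := h0
        rw [← P.kerV] at h1
        exact h1
      have hMz : P.mean (a - b) = 0 := by
        simp [PolarDecomp.mean, ContinuousLinearMap.mul_apply, hRz, hVz]
      have h2 : P.mean (a - b) = P.mean 0 := by rw [hMz, map_zero]
      have h3 := hMinj h2
      rwa [sub_eq_zero] at h3
    have hclosed' : IsClosed ((LinearMap.range (T : H →ₗ[ℂ] H) : Submodule ℂ H) : Set H) := by
      rw [LinearMap.coe_range]
      exact hcl
    haveI : CompleteSpace (LinearMap.range (T : H →ₗ[ℂ] H)) := hclosed'.completeSpace_coe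
    let g : H →L[ℂ] (LinearMap.range (T : H →ₗ[ℂ] H)) :=
      T.codRestrict _ (fun x => LinearMap.mem_range_self _ x)
    have hginj : LinearMap.ker (g : H →ₗ[ℂ] LinearMap.range (T : H →ₗ[ℂ] H)) = ⊥ := by
      rw [ContinuousLinearMap.ker_codRestrict]
      exact LinearMap.ker_eq_bot.mpr hTinj
    have hgsurj : LinearMap.range (g : H →ₗ[ℂ] LinearMap.range (T : H →ₗ[ℂ] H)) = ⊤ := by
      rw [LinearMap.range_eq_top]
      rintro ⟨y, x, hx⟩
      exact ⟨x, Subtype.ext hx⟩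
    let e := ContinuousLinearEquiv.ofBijective g hginj hgsurj
    have hce : ⇑e = ⇑g := ContinuousLinearEquiv.coeFn_ofBijective g hginj hgsurj
    obtain ⟨c, hanti⟩ : ∃ c : NNReal, AntilipschitzWith c e := ⟨_, e.antilipschitz⟩
    have hc : ∀ x, ‖x‖ ≤ c * ‖T x‖ := fun x => by
      calc ‖x‖ = dist x 0 := (dist_zero_right x).symm
        _ ≤ c * dist (e x) (e 0) := hanti.le_mul_dist x 0
        _ = c * ‖T x‖ := by
            rw [map_zero, dist_zero_right, congrFun hce x]
            rfl
    have hR : IsUnit P.R := aux_R_unit P hc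
    have hV1 : adjoint P.V * P.V = 1 := aux_VV P hTinj
    have hSunit := aux_S_unit P hR
    have h2m : (2 : ℂ) • P.mean = P.V * P.R + P.R * P.V := by
      rw [PolarDecomp.mean, smul_smul]
      norm_num
    have hSm : P.R + adjoint P.V * P.R * P.V = adjoint P.V * ((2 : ℂ) • P.mean) := by
      rw [h2m, mul_add]
      simp only [← mul_assoc]
      rw [hV1, one_mul]
    have h2mUnit : IsUnit ((2 : ℂ) • P.mean) := aux_smul_unit two_ne_zero hM
    have hVadj : IsUnit (adjoint P.V) := by
      have heq : adjoint P.V =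
          (P.R + adjoint P.V * P.R * P.V) * ↑h2mUnit.unit⁻¹ := by
        rw [hSm, mul_assoc, h2mUnit.mul_val_inv, mul_one]
      rw [heq]
      exact hSunit.mul (h2mUnit.unit⁻¹).isUnit
    have hV : IsUnit P.V := by
      have h6 := hVadj.star
      rwa [← star_eq_adjoint, star_star] at h6
    rw [P.factor]
    exact hV.mul hR
end

section
/- Let T be the weighted bilateral shift on ℓ²(ℤ) with weights α_n = 1 if n is even and α_n = 1/n² if n is odd. Then T is not invertible, but its mean transform T̂ (the bilateral weighted shift with weights (α_n + α_{n+1})/2) is invertible. -/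
open Filter Topology
open scoped ENNReal
set_option maxHeartbeats 1000000

noncomputable def bilatWt (n : ℤ) : ℝ := if Even n then 1 else 1 / (n ^ 2 : ℝ)

namespace BilatAux

noncomputable abbrev H := lp (fun _ : ℤ => ℂ) 2

lemma bilatWt_nonneg (n : ℤ) : 0 ≤ bilatWt n := by
  unfold bilatWt; split
  · norm_num
  · positivity

lemma mw_half (n : ℤ) : (1:ℝ)/2 ≤ (bilatWt n + bilatWt (n+1)) / 2 := by
  rcases Int.even_or_odd n with h | h
  · have h1 : bilatWt n = 1 := if_pos h
    have h2 := bilatWt_nonneg (n+1)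
    linarith
  · have h1 : bilatWt (n+1) = 1 := if_pos h.add_one
    have h2 := bilatWt_nonneg n
    linarith

lemma mw_pos (n : ℤ) : (0:ℝ) < (bilatWt n + bilatWt (n+1)) / 2 :=
  lt_of_lt_of_le (by norm_num) (mw_half n)

lemma memℓp_shift (c : ℤ → ℂ) (M : ℝ) (hc : ∀ k, ‖c k‖ ≤ M) (x : H) :
    Memℓp (fun k : ℤ => c k * x (k+1)) 2 := by
  have hq : (0:ℝ) < (2:ℝ≥0∞).toReal := by norm_num
  have hM : 0 ≤ M := le_trans (norm_nonneg _) (hc 0)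
  apply memℓp_gen
  have hxs : Summable fun k : ℤ => ‖x k‖ ^ (2:ℝ≥0∞).toReal := (lp.memℓp x).summable hq
  have hxs' : Summable fun k : ℤ => ‖x (k+1)‖ ^ (2:ℝ≥0∞).toReal :=
    (Equiv.addRight (1:ℤ)).summable_iff.mpr hxs
  refine Summable.of_nonneg_of_le (fun k => Real.rpow_nonneg (norm_nonneg _) _)
    (fun k => ?_) (hxs'.mul_left (M ^ (2:ℝ≥0∞).toReal))
  rw [norm_mul, Real.mul_rpow (norm_nonneg _) (norm_nonneg _)]
  exact mul_le_mul_of_nonneg_right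
    (Real.rpow_le_rpow (norm_nonneg _) (hc k) hq.le)
    (Real.rpow_nonneg (norm_nonneg _) _)

lemma norm_shift_le (c : ℤ → ℂ) (M : ℝ) (hM : 0 ≤ M) (hc : ∀ k, ‖c k‖ ≤ M) (x : H) :
    ‖(⟨fun k : ℤ => c k * x (k+1), memℓp_shift c M hc x⟩ : H)‖ ≤ M * ‖x‖ := by
  have hq : (0:ℝ) < (2:ℝ≥0∞).toReal := by norm_num
  set y : H := ⟨fun k : ℤ => c k * x (k+1), memℓp_shift c M hc x⟩
  have hys : Summable fun k : ℤ => ‖y k‖ ^ (2:ℝ≥0∞).toReal := (lp.memℓp y).summable hq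
  have hxs : Summable fun k : ℤ => ‖x k‖ ^ (2:ℝ≥0∞).toReal := (lp.memℓp x).summable hq
  have hxs' : Summable fun k : ℤ => ‖x (k+1)‖ ^ (2:ℝ≥0∞).toReal :=
    (Equiv.addRight (1:ℤ)).summable_iff.mpr hxs
  have key : ‖y‖ ^ (2:ℝ≥0∞).toReal ≤ (M * ‖x‖) ^ (2:ℝ≥0∞).toReal := by
    rw [lp.norm_rpow_eq_tsum hq y]
    have hterm : ∀ k : ℤ, ‖y k‖ ^ (2:ℝ≥0∞).toReal
        ≤ M ^ (2:ℝ≥0∞).toReal * ‖x (k+1)‖ ^ (2:ℝ≥0∞).toReal := by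
      intro k
      show ‖c k * x (k+1)‖ ^ (2:ℝ≥0∞).toReal ≤ _
      rw [norm_mul, Real.mul_rpow (norm_nonneg _) (norm_nonneg _)]
      exact mul_le_mul_of_nonneg_right
        (Real.rpow_le_rpow (norm_nonneg _) (hc k) hq.le)
        (Real.rpow_nonneg (norm_nonneg _) _)
    calc ∑' k : ℤ, ‖y k‖ ^ (2:ℝ≥0∞).toReal
        ≤ ∑' k : ℤ, M ^ (2:ℝ≥0∞).toReal * ‖x (k+1)‖ ^ (2:ℝ≥0∞).toReal :=
          Summable.tsum_le_tsum hterm hys (hxs'.mul_left _)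
      _ = M ^ (2:ℝ≥0∞).toReal * ∑' k : ℤ, ‖x (k+1)‖ ^ (2:ℝ≥0∞).toReal := tsum_mul_left
      _ = M ^ (2:ℝ≥0∞).toReal * ∑' k : ℤ, ‖x k‖ ^ (2:ℝ≥0∞).toReal := by
          congr 1
          exact (Equiv.addRight (1:ℤ)).tsum_eq (fun k => ‖x k‖ ^ (2:ℝ≥0∞).toReal)
      _ = M ^ (2:ℝ≥0∞).toReal * ‖x‖ ^ (2:ℝ≥0∞).toReal := by
          rw [lp.norm_rpow_eq_tsum hq x]
      _ = (M * ‖x‖) ^ (2:ℝ≥0∞).toReal := (Real.mul_rpow hM (norm_nonneg _)).symm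
  have h2 : ((2:ℝ≥0∞)).toReal = ((2:ℕ):ℝ) := by norm_num
  rw [h2, Real.rpow_natCast, Real.rpow_natCast] at key
  exact (pow_le_pow_iff_left₀ (norm_nonneg _) (by positivity) (by norm_num)).mp key

noncomputable def bShift (c : ℤ → ℂ) (M : ℝ) (hM : 0 ≤ M) (hc : ∀ k, ‖c k‖ ≤ M) :
    H →L[ℂ] H :=
  LinearMap.mkContinuous
    { toFun := fun x => ⟨fun k : ℤ => c k * x (k+1), memℓp_shift c M hc x⟩
      map_add' := by
        intro a b
        apply lp.ext
        funext k
        simp [lp.coeFn_add, mul_add]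
        rfl
      map_smul' := by
        intro a b
        apply lp.ext
        funext k
        simp [lp.coeFn_smul, smul_eq_mul]
        ring }
    M (norm_shift_le c M hM hc)

lemma bShift_apply (c : ℤ → ℂ) (M : ℝ) (hM : 0 ≤ M) (hc : ∀ k, ‖c k‖ ≤ M) (x : H) (k : ℤ) :
    (bShift c M hM hc x : ∀ _ : ℤ, ℂ) k = c k * x (k+1) := rfl

lemma bShift_single (c : ℤ → ℂ) (M : ℝ) (hM : 0 ≤ M) (hc : ∀ k, ‖c k‖ ≤ M) (n : ℤ) :
    bShift c M hM hc (lp.single 2 n 1) = c (n-1) • lp.single 2 (n-1) (1:ℂ) := by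
  apply lp.ext
  funext k
  rw [bShift_apply]
  rw [lp.coeFn_smul]
  simp only [Pi.smul_apply, smul_eq_mul]
  by_cases h : k = n - 1
  · subst h
    rw [lp.single_apply_self]
    have : n - 1 + 1 = n := by ring
    rw [this, lp.single_apply_self]
  · rw [lp.single_apply_ne 2 (n-1) _ h, lp.single_apply_ne 2 n _ (by omega)]
    ring

lemma clm_ext_single (A B : H →L[ℂ] H)
    (h : ∀ n : ℤ, A (lp.single 2 n 1) = B (lp.single 2 n 1)) : A = B := by
  refine ContinuousLinearMap.ext fun f => ?_
  have hs := lp.hasSum_single (E := fun _ : ℤ => ℂ) (p := 2) (by norm_num) f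
  have hA := hs.mapL A
  have hB := hs.mapL B
  have heq : ∀ n : ℤ, A (lp.single 2 n (f n)) = B (lp.single 2 n (f n)) := by
    intro n
    have hfn : (f n) • (lp.single 2 n (1:ℂ) : H) = lp.single 2 n (f n) := by
      rw [← lp.single_smul, smul_eq_mul, mul_one]
    rw [← hfn, map_smul, map_smul, h n]
  rw [funext heq] at hA
  exact hA.unique hB

lemma norm_single_one (n : ℤ) : ‖(lp.single 2 n (1:ℂ) : H)‖ = 1 := by
  have h : ‖(lp.single 2 n (1:ℂ) : H)‖ = ‖(1:ℂ)‖ :=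
    lp.norm_single (E := fun _ : ℤ => ℂ) (p := 2) (by norm_num) n (1:ℂ)
  simpa using h

end BilatAux

open BilatAux

theorem bilateral_shift_example
    (T That : lp (fun _ : ℤ => ℂ) 2 →L[ℂ] lp (fun _ : ℤ => ℂ) 2)
    (hT : ∀ n : ℤ, T (lp.single 2 n 1) = (bilatWt n : ℂ) • lp.single 2 (n + 1) 1)
    (hThat : ∀ n : ℤ, That (lp.single 2 n 1) =
      (((bilatWt n + bilatWt (n + 1)) / 2 : ℝ) : ℂ) • lp.single 2 (n + 1) 1) :
    ¬ IsUnit T ∧ IsUnit That := by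
  constructor
  · rintro ⟨u, hu⟩
    set B : H →L[ℂ] H := ((u⁻¹ : (H →L[ℂ] H)ˣ) : H →L[ℂ] H) with hB
    have hBT : ∀ x : H, B (T x) = x := by
      intro x
      have h1 : ((↑u⁻¹ * ↑u : H →L[ℂ] H)) x = x := by
        rw [u.inv_mul]; rfl
      rw [hu] at h1
      exact h1
    obtain ⟨m, hm⟩ := exists_nat_gt ‖B‖
    set n : ℤ := 2 * (m : ℤ) + 1 with hn
    have hodd : ¬ Even n := by simp [hn, Int.even_add_one, parity_simps]
    have hwt : bilatWt n = 1 / ((n : ℝ) ^ 2) := if_neg hodd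
    have key : lp.single 2 n (1:ℂ) = (bilatWt n : ℂ) • B (lp.single 2 (n+1) 1) := by
      rw [← map_smul, ← hT n, hBT]
    have hle : (1:ℝ) ≤ bilatWt n * ‖B‖ := by
      have := congrArg norm key
      rw [norm_single_one, norm_smul] at this
      have hb : ‖((bilatWt n : ℝ) : ℂ)‖ = bilatWt n := by
        rw [Complex.norm_real, Real.norm_eq_abs, abs_of_nonneg (bilatWt_nonneg n)]
      rw [hb] at this
      calc (1:ℝ) = bilatWt n * ‖B (lp.single 2 (n+1) 1)‖ := this
        _ ≤ bilatWt n * (‖B‖ * ‖(lp.single 2 (n+1) (1:ℂ) : H)‖) :=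
            mul_le_mul_of_nonneg_left (B.le_opNorm _) (bilatWt_nonneg n)
        _ = bilatWt n * ‖B‖ := by rw [norm_single_one, mul_one]
    rw [hwt] at hle
    have hn1 : (1:ℝ) ≤ (n:ℝ) := by
      have : (1:ℤ) ≤ n := by omega
      exact_mod_cast this
    have hnB : ‖B‖ < (n:ℝ) := by
      have : (m:ℝ) + 1 ≤ (n:ℝ) := by
        push_cast [hn]; linarith
      linarith
    have hsq : (0:ℝ) < (n:ℝ)^2 := by positivity
    rw [div_mul_eq_mul_div, one_mul, le_div_iff₀ hsq] at hle
    nlinarith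
  · set c : ℤ → ℂ := fun k => (((bilatWt k + bilatWt (k+1)) / 2)⁻¹ : ℝ) with hc
    have hcb : ∀ k, ‖c k‖ ≤ 2 := by
      intro k
      rw [hc]
      simp only [Complex.norm_real]
      rw [Real.norm_eq_abs, abs_of_nonneg (inv_nonneg.mpr (mw_pos k).le)]
      calc ((bilatWt k + bilatWt (k+1)) / 2)⁻¹ ≤ ((1:ℝ)/2)⁻¹ :=
            inv_anti₀ (by norm_num) (mw_half k)
        _ = 2 := by norm_num
    set S : H →L[ℂ] H := bShift c 2 (by norm_num) hcb with hS
    have hSsingle : ∀ n : ℤ, S (lp.single 2 n 1) = c (n-1) • lp.single 2 (n-1) (1:ℂ) :=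
      fun n => bShift_single c 2 (by norm_num) hcb n
    have hmul : ∀ n : ℤ,
        (c n) * (((bilatWt n + bilatWt (n + 1)) / 2 : ℝ) : ℂ) = 1 := by
      intro n
      show ((((bilatWt n + bilatWt (n+1)) / 2)⁻¹ : ℝ) : ℂ) * _ = 1
      rw [← Complex.ofReal_mul, inv_mul_cancel₀ (mw_pos n).ne', Complex.ofReal_one]
    have h1 : That * S = 1 := by
      apply clm_ext_single
      intro n
      rw [ContinuousLinearMap.mul_apply, hSsingle n, map_smul, hThat (n-1)]
      have hn1 : n - 1 + 1 = n := by ring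
      have hm := hmul (n-1)
      rw [hn1] at hm
      rw [hn1, smul_smul, hm, one_smul, ContinuousLinearMap.one_apply]
    have h2 : S * That = 1 := by
      apply clm_ext_single
      intro n
      rw [ContinuousLinearMap.mul_apply, hThat n, map_smul, hSsingle (n+1)]
      have hn1 : n + 1 - 1 = n := by ring
      rw [hn1, smul_smul, mul_comm, hmul n, one_smul, ContinuousLinearMap.one_apply]
    exact ⟨⟨That, S, h1, h2⟩, rfl⟩
end

section
/- Let T be a bounded operator on a Hilbert space. Then the mean transform T̂ equals the identity operator if and only if T equals the identity operator. -/
open ContinuousLinearMap Filter Topology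

set_option synthInstance.maxHeartbeats 1000000
set_option maxHeartbeats 1000000

section Aux
variable {H : Type*} [NormedAddCommGroup H] [InnerProductSpace ℂ H] [CompleteSpace H]

lemma my_commute_cfcHom (a b : H →L[ℂ] H) (ha : IsSelfAdjoint a) (h : Commute b a)
    (g : C(spectrum ℝ a, ℝ)) : Commute b (cfcHom ha (R := ℝ) g) := by
  let φ := cfcHom ha (R := ℝ)
  let S : Subalgebra ℝ C(spectrum ℝ a, ℝ) :=
  { carrier := {g | Commute b (φ g)}
    mul_mem' := @fun f g (hf : Commute b (φ f)) (hg : Commute b (φ g)) => by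
      show Commute b (φ (f * g))
      rw [map_mul]
      exact hf.mul_right hg
    add_mem' := @fun f g (hf : Commute b (φ f)) (hg : Commute b (φ g)) => by
      show Commute b (φ (f + g))
      rw [map_add]
      exact hf.add_right hg
    algebraMap_mem' := fun r => by
      show Commute b (φ (algebraMap ℝ _ r))
      rw [AlgHomClass.commutes]
      exact (Algebra.commutes r b).symm }
  have hSclosed : IsClosed (S : Set C(spectrum ℝ a, ℝ)) := by
    have heq : (S : Set C(spectrum ℝ a, ℝ)) = (fun g => φ g) ⁻¹' {x | b * x = x * b} := by
      ext g; exact Iff.rfl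
    rw [heq]
    exact IsClosed.preimage (cfcHom_isClosedEmbedding ha).continuous
      (isClosed_eq (continuous_mul_left b) (continuous_mul_right b))
  have hX : (polynomialFunctions (spectrum ℝ a)) ≤ S := by
    rw [polynomialFunctions.eq_adjoin_X]
    apply Algebra.adjoin_le
    rintro x rfl
    show Commute b (φ _)
    have hid : (Polynomial.toContinuousMapOnAlgHom (spectrum ℝ a) Polynomial.X
        : C(spectrum ℝ a, ℝ)) = (ContinuousMap.id ℝ).restrict (spectrum ℝ a) := by
      ext x; simp
    rw [hid]
    show Commute b (cfcHom ha _)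
    rw [cfcHom_id ha]
    exact h
  have htop : (⊤ : Subalgebra ℝ C(spectrum ℝ a, ℝ)) ≤ S := by
    rw [← polynomialFunctions.topologicalClosure (spectrum ℝ a)]
    exact Subalgebra.topologicalClosure_minimal hX hSclosed
  exact htop Algebra.mem_top

lemma my_commute_cfc (a b : H →L[ℂ] H) (ha : IsSelfAdjoint a) (h : Commute b a)
    (f : ℝ → ℝ) : Commute b (cfc f a) := by
  refine cfc_cases (fun x => Commute b x) a f (Commute.zero_right b) fun hf ha' => ?_
  exact my_commute_cfcHom a b ha' h _

lemma my_commute_sqrt (b r : H →L[ℂ] H) (hr : 0 ≤ r) (h : Commute b (r * r)) :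
    Commute b r := by
  have hsa : IsSelfAdjoint r := ((nonneg_iff_isPositive r).mp hr).isSelfAdjoint
  have h2 : Commute b (r ^ 2) := by rwa [sq r]
  have hsq : IsSelfAdjoint (r ^ 2) := hsa.pow 2
  have key : cfc Real.sqrt (r ^ 2) = r := by
    rw [← cfc_comp_pow Real.sqrt 2 r]
    have heq : (spectrum ℝ r).EqOn (fun x => Real.sqrt (x ^ 2)) id := fun x hx => by
      simp [Real.sqrt_sq (spectrum_nonneg_of_nonneg hr hx)]
    rw [cfc_congr heq, cfc_id ℝ r]
  have := my_commute_cfc (r ^ 2) b hsq h2 Real.sqrt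
  rwa [key] at this

end Aux

theorem mean_transform_eq_one_iff {H : Type*} [NormedAddCommGroup H] [InnerProductSpace ℂ H]
    [CompleteSpace H] (T : H →L[ℂ] H) (P : PolarDecomp T) :
    P.mean = 1 ↔ T = 1 := by
  have hR : (0 : H →L[ℂ] H) ≤ P.R := (nonneg_iff_isPositive P.R).mpr P.posR
  constructor
  · intro hm
    have h2 : P.V * P.R + P.R * P.V = (2 : ℂ) • (1 : H →L[ℂ] H) := by
      have hm' : (2⁻¹ : ℂ) • (P.V * P.R + P.R * P.V) = 1 := hm
      have := congrArg (fun x => (2 : ℂ) • x) hm'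
      simpa [smul_smul] using this
    have key : P.R * P.R * P.V = P.V * (P.R * P.R) := by
      have e1 := congrArg (fun x => P.R * x) h2
      have e2 := congrArg (fun x => x * P.R) h2
      simp only [mul_add, add_mul, mul_smul_comm, smul_mul_assoc, mul_one, one_mul,
        ← mul_assoc] at e1 e2
      -- e1 : P.R * P.V * P.R + P.R * P.R * P.V = 2 • P.R
      -- e2 : P.V * P.R * P.R + P.R * P.V * P.R = 2 • P.R
      have := e1.trans e2.symm
      rw [add_comm (P.V * P.R * P.R)] at this
      have := add_left_cancel this
      rw [this, mul_assoc]
    have hcomm : Commute P.V P.R :=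
      my_commute_sqrt P.V P.R hR (by rw [Commute, SemiconjBy, key])
    have hVR : P.V * P.R = 1 := by
      rw [← hcomm.eq] at h2
      have h3 : (2 : ℂ) • (P.V * P.R) = (2 : ℂ) • (1 : H →L[ℂ] H) := by
        rw [two_smul]; exact h2
      exact smul_right_injective (H →L[ℂ] H) (two_ne_zero) h3
    rw [P.factor, hVR]
  · intro hT
    have hRR : P.R * P.R = 1 := by
      rw [P.sqR, hT, mul_one]
      have : (1 : H →L[ℂ] H) = ContinuousLinearMap.id ℂ H := rfl
      rw [this, adjoint_id]
    have hR1 : P.R = 1 := by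
      have hs1 : CFC.sqrt (1 : H →L[ℂ] H) = P.R := CFC.sqrt_unique hRR hR
      have hs2 : CFC.sqrt (1 : H →L[ℂ] H) = 1 := CFC.sqrt_unique (one_mul 1) zero_le_one
      rw [← hs1, hs2]
    have hV1 : P.V = 1 := by
      have hf := P.factor
      rw [hR1, mul_one] at hf
      rw [← hf, hT]
    show (2⁻¹ : ℂ) • (P.V * P.R + P.R * P.V) = 1
    rw [hR1, hV1, mul_one, ← two_smul ℂ (1 : H →L[ℂ] H), smul_smul]
    norm_num
end

section
/- For any bounded operator T on a Hilbert space, ‖Δ(T)‖ ≤ ‖T̂‖ ≤ ‖T‖, where Δ(T) = |T|^{1/2} V |T|^{1/2} is the Aluthge transform and T̂ is the mean transform. In particular, the spectral radius of T satisfies r(T) ≤ ‖T̂‖. -/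
open ContinuousLinearMap Filter Topology

set_option maxHeartbeats 1000000
set_option synthInstance.maxHeartbeats 400000

section HeinzAux

open NormedSpace MeasureTheory Set

variable {H : Type*} [NormedAddCommGroup H] [InnerProductSpace ℂ H] [CompleteSpace H]

local notation "⟪" x ", " y "⟫" => @inner ℂ _ _ x y

private lemma expE_hasDerivAt (A : H →L[ℂ] H) (x : H) (s : ℝ) :
    HasDerivAt (fun t : ℝ => exp (t • A) x) (A (exp (s • A) x)) s := by
  have h := hasDerivAt_exp_smul_const' (𝕂 := ℝ) A s
  have h2 := ((ContinuousLinearMap.apply ℂ H x).restrictScalars ℝ).hasFDerivAt.comp_hasDerivAt s h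
  simpa [ContinuousLinearMap.mul_apply, Function.comp_def] using h2

private lemma expE_continuous (A : H →L[ℂ] H) (x : H) :
    Continuous fun t : ℝ => exp (t • A) x := by
  have : Differentiable ℝ fun t : ℝ => exp (t • A) x :=
    fun s => (expE_hasDerivAt A x s).differentiableAt
  exact this.continuous

private lemma exp_neg_pos_apply_norm_le {C : H →L[ℂ] H} (hC : C.IsPositive)
    {t : ℝ} (ht : 0 ≤ t) (x : H) : ‖exp (t • (-C)) x‖ ≤ ‖x‖ := by
  set w : ℝ → H := fun s => exp (s • (-C)) x with hw
  have hwd : ∀ s, HasDerivAt w (-(C (w s))) s := by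
    intro s
    have h := expE_hasDerivAt (-C) x s
    simpa only [ContinuousLinearMap.neg_apply] using h
  have hg : ∀ s, HasDerivAt (fun s => ‖w s‖ ^ 2) (-(2 * C.reApplyInnerSelf (w s))) s := by
    intro s
    have h1 : HasDerivAt (fun s => ⟪w s, w s⟫)
        (⟪w s, -(C (w s))⟫ + ⟪-(C (w s)), w s⟫) s :=
      HasDerivAt.inner (𝕜 := ℂ) (hwd s) (hwd s)
    have h2 := (RCLike.reCLM (K := ℂ)).hasFDerivAt.comp_hasDerivAt s h1
    have h3 : (fun s => RCLike.reCLM (K := ℂ) ⟪w s, w s⟫) = fun s => ‖w s‖ ^ 2 := by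
      funext s; simp [RCLike.reCLM_apply]
      norm_cast
    simp only [Function.comp_def] at h2
    rw [h3] at h2
    refine h2.congr_deriv ?_
    simp only [ContinuousLinearMap.reApplyInnerSelf, map_add, inner_neg_left, inner_neg_right,
      map_neg, RCLike.reCLM_apply]
    have hsymm : (RCLike.re (⟪w s, C (w s)⟫) : ℝ) = RCLike.re (⟪C (w s), w s⟫) := inner_re_symm _ _
    rw [hsymm]
    ring
  have hdiff : Differentiable ℝ fun s => ‖w s‖ ^ 2 := fun s => (hg s).differentiableAt
  have hanti : Antitone fun s => ‖w s‖ ^ 2 := by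
    apply antitone_of_deriv_nonpos hdiff
    intro s
    rw [(hg s).deriv]
    have := hC.2 (w s)
    linarith
  have h0 : w 0 = x := by simp [hw]
  have h4 : ‖w t‖ ^ 2 ≤ ‖w 0‖ ^ 2 := hanti ht
  rw [h0] at h4
  show ‖w t‖ ≤ ‖x‖
  exact (pow_le_pow_iff_left₀ (norm_nonneg _) (norm_nonneg _) (by norm_num : (2:ℕ) ≠ 0)).mp h4

private lemma exp_shift_norm_le {C : H →L[ℂ] H} (hC : C.IsPositive) (ε : ℝ)
    {t : ℝ} (ht : 0 ≤ t) (x : H) :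
    ‖exp (t • (-(ε ^ 2 • (1 : H →L[ℂ] H) + C))) x‖ ≤ Real.exp (-(ε ^ 2 * t)) * ‖x‖ := by
  have hsplit : t • (-(ε ^ 2 • (1 : H →L[ℂ] H) + C))
      = (-(ε ^ 2 * t)) • (1 : H →L[ℂ] H) + t • (-C) := by
    rw [neg_add, smul_add, smul_neg, smul_neg, smul_smul]
    rw [show t * ε ^ 2 = ε ^ 2 * t from mul_comm _ _, neg_smul]
  have hcomm : Commute ((-(ε ^ 2 * t)) • (1 : H →L[ℂ] H)) (t • (-C)) :=
    (Commute.one_left _).smul_left _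
  rw [hsplit, exp_add_of_commute_of_mem_ball (𝕂 := ℝ) hcomm
    ((expSeries_radius_eq_top ℝ (H →L[ℂ] H)).symm ▸ edist_lt_top _ _)
    ((expSeries_radius_eq_top ℝ (H →L[ℂ] H)).symm ▸ edist_lt_top _ _)]
  have h1 : exp ((-(ε ^ 2 * t)) • (1 : H →L[ℂ] H))
      = Real.exp (-(ε ^ 2 * t)) • (1 : H →L[ℂ] H) := by
    rw [← Algebra.algebraMap_eq_smul_one, ← algebraMap_exp_comm (𝔸 := H →L[ℂ] H), ← Real.exp_eq_exp_ℝ,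
      Algebra.algebraMap_eq_smul_one]
  rw [h1]
  rw [ContinuousLinearMap.mul_apply, ContinuousLinearMap.smul_apply, ContinuousLinearMap.one_apply,
    norm_smul, Real.norm_eq_abs, abs_of_pos (Real.exp_pos _)]
  exact mul_le_mul_of_nonneg_left (exp_neg_pos_apply_norm_le hC ht x) (Real.exp_pos _).le

private lemma opNorm_le_of_inner_le (B : H →L[ℂ] H) (c : ℝ) (hc : 0 ≤ c)
    (h : ∀ x y : H, ‖⟪y, B x⟫‖ ≤ c * (‖x‖ ^ 2 + ‖y‖ ^ 2) / 2) : ‖B‖ ≤ c := by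
  refine ContinuousLinearMap.opNorm_le_bound _ hc fun x => ?_
  by_cases hBx : B x = 0
  · simp [hBx]
    positivity
  have hBxn : 0 < ‖B x‖ := norm_pos_iff.mpr hBx
  have hxn : 0 < ‖x‖ := by
    rcases eq_or_lt_of_le (norm_nonneg x) with h0 | h0
    · exfalso; apply hBx; rw [show x = 0 from norm_eq_zero.mp h0.symm]; simp
    · exact h0
  set y : H := ((‖x‖ / ‖B x‖ : ℝ) : ℂ) • B x with hy
  have hyn : ‖y‖ = ‖x‖ := by
    rw [hy, norm_smul]
    simp only [Complex.norm_real, Real.norm_eq_abs, abs_of_pos (div_pos hxn hBxn)]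
    field_simp
  have hinner : ‖⟪y, B x⟫‖ = ‖x‖ * ‖B x‖ := by
    rw [hy, inner_smul_left, norm_mul, inner_self_eq_norm_sq_to_K]
    rw [RCLike.norm_conj]
    simp only [norm_pow, Complex.norm_real, Real.norm_eq_abs, RCLike.norm_ofReal, abs_norm,
      abs_of_pos (div_pos hxn hBxn), abs_of_pos hBxn]
    field_simp
  have := h x y
  rw [hinner, hyn] at this
  have : ‖x‖ * ‖B x‖ ≤ c * ‖x‖ ^ 2 := by nlinarith
  nlinarith

private lemma heinz_aux (Z V : H →L[ℂ] H) (hZ : Z.IsPositive) (ε : ℝ) (hε : 0 < ε)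
    (C : H →L[ℂ] H) (hC : C.IsPositive) (hZZ : Z * Z = ε ^ 2 • (1 : H →L[ℂ] H) + C) :
    ‖Z * V * Z‖ ≤ ‖Z * Z * V + V * (Z * Z)‖ / 2 := by
  set W : H →L[ℂ] H := Z * Z * V + V * (Z * Z) with hW
  set E : ℝ → H →L[ℂ] H := fun s => exp (s • (-(Z * Z))) with hE
  -- decay estimate
  have hdecay : ∀ s : ℝ, 0 ≤ s → ∀ z : H, ‖E s z‖ ≤ Real.exp (-(ε ^ 2 * s)) * ‖z‖ := by
    intro s hs z
    have hEs : E s = exp (s • (-(ε ^ 2 • (1 : H →L[ℂ] H) + C))) := by rw [hE, hZZ]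
    rw [hEs]
    exact exp_shift_norm_le hC ε hs z
  have hZZsa : IsSelfAdjoint (Z * Z) := by
    have h1 : IsSelfAdjoint Z := hZ.isSelfAdjoint
    show star (Z * Z) = Z * Z
    rw [star_mul, h1.star_eq]
  have hEd : ∀ (z : H) (s : ℝ), HasDerivAt (fun s => E s z) (-((Z * Z) (E s z))) s := by
    intro z s
    have h := expE_hasDerivAt (-(Z * Z)) z s
    simpa only [ContinuousLinearMap.neg_apply] using h
  have hEc : ∀ z : H, Continuous fun s => E s z := fun z => expE_continuous _ z
  have hE0 : ∀ z : H, E 0 z = z := by intro z; simp [hE]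
  have hexp0 : Tendsto (fun s : ℝ => Real.exp (-(2 * ε ^ 2 * s))) atTop (𝓝 0) := by
    have h2 : (0:ℝ) < 2 * ε ^ 2 := by positivity
    have := Real.tendsto_exp_neg_atTop_nhds_zero.comp (Filter.Tendsto.const_mul_atTop h2 tendsto_id)
    simpa [Function.comp_def] using this
  have hexp_int : IntegrableOn (fun s : ℝ => Real.exp (-(2 * ε ^ 2 * s))) (Ioi 0) := by
    have h2 : (0:ℝ) < 2 * ε ^ 2 := by positivity
    have := exp_neg_integrableOn_Ioi 0 h2
    simpa only [neg_mul] using this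
  have hexpsq : ∀ s : ℝ, Real.exp (-(ε ^ 2 * s)) * Real.exp (-(ε ^ 2 * s))
      = Real.exp (-(2 * ε ^ 2 * s)) := by
    intro s; rw [← Real.exp_add]; congr 1; ring
  have hub : ∀ (z : H) (s : ℝ), 0 ≤ s → ‖Z (E s z)‖ ≤ ‖Z‖ * ‖z‖ * Real.exp (-(ε ^ 2 * s)) := by
    intro z s hs
    refine (Z.le_opNorm _).trans ?_
    calc ‖Z‖ * ‖E s z‖ ≤ ‖Z‖ * (Real.exp (-(ε ^ 2 * s)) * ‖z‖) :=
          mul_le_mul_of_nonneg_left (hdecay s hs z) (norm_nonneg Z)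
      _ = ‖Z‖ * ‖z‖ * Real.exp (-(ε ^ 2 * s)) := by ring
  -- square-integral identity
  have hsqint : ∀ z : H, (IntegrableOn (fun s => ‖Z (E s z)‖ ^ 2) (Ioi 0) volume) ∧
      ∫ s in Ioi (0:ℝ), ‖Z (E s z)‖ ^ 2 = ‖z‖ ^ 2 / 2 := by
    intro z
    have hcont : Continuous fun s => ‖Z (E s z)‖ ^ 2 :=
      ((Z.continuous.comp (hEc z)).norm.pow 2)
    have hbound : ∀ s ∈ Ioi (0:ℝ),
        ‖‖Z (E s z)‖ ^ 2‖ ≤ (‖Z‖ ^ 2 * ‖z‖ ^ 2) * Real.exp (-(2 * ε ^ 2 * s)) := by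
      intro s hs
      rw [Real.norm_eq_abs, abs_of_nonneg (by positivity)]
      calc ‖Z (E s z)‖ ^ 2 ≤ (‖Z‖ * ‖z‖ * Real.exp (-(ε ^ 2 * s))) ^ 2 :=
            pow_le_pow_left₀ (norm_nonneg _) (hub z s (le_of_lt hs)) 2
        _ = (‖Z‖ ^ 2 * ‖z‖ ^ 2) * Real.exp (-(2 * ε ^ 2 * s)) := by
            rw [show (‖Z‖ * ‖z‖ * Real.exp (-(ε ^ 2 * s))) ^ 2
              = ‖Z‖ ^ 2 * ‖z‖ ^ 2 * (Real.exp (-(ε ^ 2 * s)) * Real.exp (-(ε ^ 2 * s))) from by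
                ring, hexpsq s]
    have hint : IntegrableOn (fun s => ‖Z (E s z)‖ ^ 2) (Ioi 0) volume := by
      refine Integrable.mono' (hexp_int.const_mul (‖Z‖ ^ 2 * ‖z‖ ^ 2))
        hcont.aestronglyMeasurable ?_
      exact (ae_restrict_iff' measurableSet_Ioi).mpr (Filter.Eventually.of_forall hbound)
    refine ⟨hint, ?_⟩
    -- FTC for ψ s = ‖E s z‖ ^ 2
    have hψ : ∀ s : ℝ, HasDerivAt (fun s => ‖E s z‖ ^ 2) (-(2 * ‖Z (E s z)‖ ^ 2)) s := by
      intro s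
      have h1 : HasDerivAt (fun s => (⟪E s z, E s z⟫ : ℂ))
          (⟪E s z, -((Z * Z) (E s z))⟫ + ⟪-((Z * Z) (E s z)), E s z⟫) s :=
        HasDerivAt.inner (𝕜 := ℂ) (hEd z s) (hEd z s)
      have h2 := (RCLike.reCLM (K := ℂ)).hasFDerivAt.comp_hasDerivAt s h1
      simp only [Function.comp_def] at h2
      have h3 : (fun s => RCLike.reCLM (K := ℂ) ⟪E s z, E s z⟫) = fun s => ‖E s z‖ ^ 2 := by
        funext s; simp [RCLike.reCLM_apply]
        norm_cast
      rw [h3] at h2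
      refine h2.congr_deriv ?_
      have h4 : (⟪E s z, (Z * Z) (E s z)⟫ : ℂ) = ⟪Z (E s z), Z (E s z)⟫ := by
        rw [ContinuousLinearMap.mul_apply]
        conv_lhs => rw [← hZ.isSelfAdjoint.adjoint_eq]
        rw [ContinuousLinearMap.adjoint_inner_right, hZ.isSelfAdjoint.adjoint_eq]
      simp only [map_add, inner_neg_left, inner_neg_right, map_neg, RCLike.reCLM_apply]
      have hsymm : RCLike.re ((⟪(Z * Z) (E s z), E s z⟫ : ℂ))
          = RCLike.re ((⟪E s z, (Z * Z) (E s z)⟫ : ℂ)) := inner_re_symm _ _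
      rw [hsymm, h4, inner_self_eq_norm_sq (𝕜 := ℂ)]
      ring
    have htend : Tendsto (fun s => ‖E s z‖ ^ 2) atTop (𝓝 0) := by
      have hb : ∀ᶠ s in atTop, ‖‖E s z‖ ^ 2‖ ≤ ‖z‖ ^ 2 * Real.exp (-(2 * ε ^ 2 * s)) := by
        filter_upwards [Filter.eventually_ge_atTop (0:ℝ)] with s hs
        rw [Real.norm_eq_abs, abs_of_nonneg (by positivity)]
        calc ‖E s z‖ ^ 2 ≤ (Real.exp (-(ε ^ 2 * s)) * ‖z‖) ^ 2 :=
              pow_le_pow_left₀ (norm_nonneg _) (hdecay s hs z) 2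
          _ = ‖z‖ ^ 2 * Real.exp (-(2 * ε ^ 2 * s)) := by
              rw [show (Real.exp (-(ε ^ 2 * s)) * ‖z‖) ^ 2
                = ‖z‖ ^ 2 * (Real.exp (-(ε ^ 2 * s)) * Real.exp (-(ε ^ 2 * s))) from by ring,
                hexpsq s]
      have hg : Tendsto (fun s : ℝ => ‖z‖ ^ 2 * Real.exp (-(2 * ε ^ 2 * s))) atTop (𝓝 0) := by
        simpa using hexp0.const_mul (‖z‖ ^ 2)
      exact squeeze_zero_norm' hb hg
    have hint2 : IntegrableOn (fun s => -(2 * ‖Z (E s z)‖ ^ 2)) (Ioi 0) volume :=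
      (hint.const_mul 2).neg
    have hFTC := integral_Ioi_of_hasDerivAt_of_tendsto' (fun s _ => hψ s) hint2 htend
    simp only [hE0 z] at hFTC
    rw [MeasureTheory.integral_neg, MeasureTheory.integral_const_mul] at hFTC
    linarith
  -- main inner-product estimate
  have hmain : ∀ x y : H, ‖(⟪y, (Z * V * Z) x⟫ : ℂ)‖ ≤ (‖W‖ / 2) * (‖x‖ ^ 2 + ‖y‖ ^ 2) / 2 := by
    intro x y
    set u : ℝ → H := fun s => Z (E s x) with hu_def
    set v : ℝ → H := fun s => Z (E s y) with hv_def
    have hu : ∀ s, HasDerivAt u (-((Z * Z) (u s))) s := by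
      intro s
      have h := (Z.restrictScalars ℝ).hasFDerivAt.comp_hasDerivAt s (hEd x s)
      simpa [ContinuousLinearMap.mul_apply, Function.comp_def] using h
    have hv : ∀ s, HasDerivAt v (-((Z * Z) (v s))) s := by
      intro s
      have h := (Z.restrictScalars ℝ).hasFDerivAt.comp_hasDerivAt s (hEd y s)
      simpa [ContinuousLinearMap.mul_apply, Function.comp_def] using h
    have hVu : ∀ s, HasDerivAt (fun s => V (u s)) (-(V ((Z * Z) (u s)))) s := by
      intro s
      have h := (V.restrictScalars ℝ).hasFDerivAt.comp_hasDerivAt s (hu s)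
      simpa [Function.comp_def] using h
    have hucont : Continuous u := Z.continuous.comp (hEc x)
    have hvcont : Continuous v := Z.continuous.comp (hEc y)
    have hh : ∀ s, HasDerivAt (fun s => (⟪v s, V (u s)⟫ : ℂ)) (-(⟪v s, W (u s)⟫ : ℂ)) s := by
      intro s
      have h1 := HasDerivAt.inner (𝕜 := ℂ) (hv s) (hVu s)
      refine h1.congr_deriv ?_
      have hadj : (⟪Z (Z (v s)), V (u s)⟫ : ℂ) = ⟪v s, Z (Z (V (u s)))⟫ := by
        conv_lhs => rw [← hZ.isSelfAdjoint.adjoint_eq]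
        rw [ContinuousLinearMap.adjoint_inner_left, ContinuousLinearMap.adjoint_inner_left]
      simp only [hW, inner_neg_left, inner_neg_right, ContinuousLinearMap.add_apply,
        ContinuousLinearMap.mul_apply, inner_add_right]
      rw [hadj]
      ring
    have hWu_bound : ∀ s ∈ Ioi (0:ℝ), ‖(⟪v s, W (u s)⟫ : ℂ)‖
        ≤ (‖W‖ * (‖Z‖ * ‖x‖) * (‖Z‖ * ‖y‖)) * Real.exp (-(2 * ε ^ 2 * s)) := by
      intro s hs
      calc ‖(⟪v s, W (u s)⟫ : ℂ)‖ ≤ ‖v s‖ * ‖W (u s)‖ := norm_inner_le_norm _ _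
        _ ≤ ‖v s‖ * (‖W‖ * ‖u s‖) :=
            mul_le_mul_of_nonneg_left (W.le_opNorm _) (norm_nonneg _)
        _ ≤ (‖Z‖ * ‖y‖ * Real.exp (-(ε ^ 2 * s))) * (‖W‖ * (‖Z‖ * ‖x‖ * Real.exp (-(ε ^ 2 * s)))) := by
            apply mul_le_mul (hub y s (le_of_lt hs))
            · exact mul_le_mul_of_nonneg_left (hub x s (le_of_lt hs)) (norm_nonneg _)
            · positivity
            · positivity
        _ = (‖W‖ * (‖Z‖ * ‖x‖) * (‖Z‖ * ‖y‖)) * Real.exp (-(2 * ε ^ 2 * s)) := by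
            rw [show (‖Z‖ * ‖y‖ * Real.exp (-(ε ^ 2 * s))) * (‖W‖ * (‖Z‖ * ‖x‖ * Real.exp (-(ε ^ 2 * s))))
              = (‖W‖ * (‖Z‖ * ‖x‖) * (‖Z‖ * ‖y‖)) * (Real.exp (-(ε ^ 2 * s)) * Real.exp (-(ε ^ 2 * s))) from by ring,
              hexpsq s]
    have hint3 : IntegrableOn (fun s => -(⟪v s, W (u s)⟫ : ℂ)) (Ioi 0) volume := by
      refine (Integrable.mono' (hexp_int.const_mul (‖W‖ * (‖Z‖ * ‖x‖) * (‖Z‖ * ‖y‖)))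
        ?_ ?_).neg'
      · exact (hvcont.inner
          (show Continuous fun s => W (u s) from W.continuous.comp hucont)).aestronglyMeasurable
      · exact (ae_restrict_iff' measurableSet_Ioi).mpr (Filter.Eventually.of_forall hWu_bound)
    have htend2 : Tendsto (fun s => (⟪v s, V (u s)⟫ : ℂ)) atTop (𝓝 0) := by
      have hb : ∀ᶠ s in atTop, ‖(⟪v s, V (u s)⟫ : ℂ)‖
          ≤ (‖V‖ * (‖Z‖ * ‖x‖) * (‖Z‖ * ‖y‖)) * Real.exp (-(2 * ε ^ 2 * s)) := by
        filter_upwards [Filter.eventually_ge_atTop (0:ℝ)] with s hs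
        calc ‖(⟪v s, V (u s)⟫ : ℂ)‖ ≤ ‖v s‖ * ‖V (u s)‖ := norm_inner_le_norm _ _
          _ ≤ ‖v s‖ * (‖V‖ * ‖u s‖) :=
              mul_le_mul_of_nonneg_left (V.le_opNorm _) (norm_nonneg _)
          _ ≤ (‖Z‖ * ‖y‖ * Real.exp (-(ε ^ 2 * s))) * (‖V‖ * (‖Z‖ * ‖x‖ * Real.exp (-(ε ^ 2 * s)))) := by
              apply mul_le_mul (hub y s hs)
              · exact mul_le_mul_of_nonneg_left (hub x s hs) (norm_nonneg _)
              · positivity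
              · positivity
          _ = (‖V‖ * (‖Z‖ * ‖x‖) * (‖Z‖ * ‖y‖)) * Real.exp (-(2 * ε ^ 2 * s)) := by
              rw [show (‖Z‖ * ‖y‖ * Real.exp (-(ε ^ 2 * s))) * (‖V‖ * (‖Z‖ * ‖x‖ * Real.exp (-(ε ^ 2 * s))))
                = (‖V‖ * (‖Z‖ * ‖x‖) * (‖Z‖ * ‖y‖)) * (Real.exp (-(ε ^ 2 * s)) * Real.exp (-(ε ^ 2 * s))) from by ring,
                hexpsq s]
      have hg : Tendsto (fun s : ℝ => (‖V‖ * (‖Z‖ * ‖x‖) * (‖Z‖ * ‖y‖)) * Real.exp (-(2 * ε ^ 2 * s)))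
          atTop (𝓝 0) := by
        simpa using hexp0.const_mul (‖V‖ * (‖Z‖ * ‖x‖) * (‖Z‖ * ‖y‖))
      exact squeeze_zero_norm' hb hg
    have hFTC2 := integral_Ioi_of_hasDerivAt_of_tendsto' (fun s _ => hh s) hint3 htend2
    rw [MeasureTheory.integral_neg] at hFTC2
    have hval : (⟪v 0, V (u 0)⟫ : ℂ) = ∫ s in Ioi (0:ℝ), (⟪v s, W (u s)⟫ : ℂ) := by
      rw [zero_sub] at hFTC2
      exact (neg_inj.mp hFTC2).symm
    have hl : (⟪y, (Z * V * Z) x⟫ : ℂ) = ⟪v 0, V (u 0)⟫ := by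
      have hv0 : v 0 = Z y := by rw [hv_def]; simp only [hE0]
      have hu0 : u 0 = Z x := by rw [hu_def]; simp only [hE0]
      rw [hv0, hu0, show (Z * V * Z) x = Z (V (Z x)) from rfl,
        ← ContinuousLinearMap.adjoint_inner_left Z, hZ.isSelfAdjoint.adjoint_eq]
    have hptwise : ∀ s ∈ Ioi (0:ℝ), ‖(⟪v s, W (u s)⟫ : ℂ)‖
        ≤ ‖W‖ * ((‖Z (E s x)‖ ^ 2 + ‖Z (E s y)‖ ^ 2) / 2) := by
      intro s _
      have h1 : ‖(⟪v s, W (u s)⟫ : ℂ)‖ ≤ ‖v s‖ * (‖W‖ * ‖u s‖) :=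
        (norm_inner_le_norm _ _).trans
          (mul_le_mul_of_nonneg_left (W.le_opNorm _) (norm_nonneg _))
      have hu_eq : u s = Z (E s x) := rfl
      have hv_eq : v s = Z (E s y) := rfl
      rw [← hu_eq, ← hv_eq]
      nlinarith [sq_nonneg (‖u s‖ - ‖v s‖), norm_nonneg W, norm_nonneg (u s), norm_nonneg (v s),
        mul_nonneg (norm_nonneg W) (mul_nonneg (norm_nonneg (u s)) (norm_nonneg (v s)))]
    have hg_int : Integrable (fun s => ‖W‖ * ((‖Z (E s x)‖ ^ 2 + ‖Z (E s y)‖ ^ 2) / 2))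
        (volume.restrict (Ioi 0)) :=
      (((hsqint x).1.add (hsqint y).1).div_const 2).const_mul ‖W‖
    have hnorm_le : ‖∫ s in Ioi (0:ℝ), (⟪v s, W (u s)⟫ : ℂ)‖
        ≤ ∫ s in Ioi (0:ℝ), ‖W‖ * ((‖Z (E s x)‖ ^ 2 + ‖Z (E s y)‖ ^ 2) / 2) := by
      refine MeasureTheory.norm_integral_le_of_norm_le hg_int ?_
      exact (ae_restrict_iff' measurableSet_Ioi).mpr (Filter.Eventually.of_forall hptwise)
    have hgval : ∫ s in Ioi (0:ℝ), ‖W‖ * ((‖Z (E s x)‖ ^ 2 + ‖Z (E s y)‖ ^ 2) / 2)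
        = ‖W‖ * ((‖x‖ ^ 2 / 2 + ‖y‖ ^ 2 / 2) / 2) := by
      rw [MeasureTheory.integral_const_mul, MeasureTheory.integral_div,
        MeasureTheory.integral_add (hsqint x).1 (hsqint y).1, (hsqint x).2, (hsqint y).2]
    rw [hl, hval]
    calc ‖∫ s in Ioi (0:ℝ), (⟪v s, W (u s)⟫ : ℂ)‖
        ≤ ∫ s in Ioi (0:ℝ), ‖W‖ * ((‖Z (E s x)‖ ^ 2 + ‖Z (E s y)‖ ^ 2) / 2) := hnorm_le
      _ = ‖W‖ * ((‖x‖ ^ 2 / 2 + ‖y‖ ^ 2 / 2) / 2) := hgval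
      _ = (‖W‖ / 2) * (‖x‖ ^ 2 + ‖y‖ ^ 2) / 2 := by ring
  exact opNorm_le_of_inner_le (Z * V * Z) (‖W‖ / 2) (by positivity) hmain

private lemma heinz (S V : H →L[ℂ] H) (hS : S.IsPositive) :
    ‖S * V * S‖ ≤ ‖S * S * V + V * (S * S)‖ / 2 := by
  have key : ∀ ε : ℝ, 0 < ε → ‖(S + ε • 1) * V * (S + ε • 1)‖
      ≤ ‖(S + ε • 1) * (S + ε • 1) * V + V * ((S + ε • 1) * (S + ε • 1))‖ / 2 := by
    intro ε hε
    have hsm : ∀ (r : ℝ) (A : H →L[ℂ] H), A.IsPositive → (r • A).IsPositive → True := fun _ _ _ _ => trivial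
    have hone : ((ε : ℝ) • (1 : H →L[ℂ] H)).IsPositive := by
      refine isPositive_def'.mpr ⟨?_, ?_⟩
      · show star (ε • (1 : H →L[ℂ] H)) = ε • 1
        rw [star_smul, star_one, star_trivial]
      · intro x
        show 0 ≤ RCLike.re (⟪(ε • (1 : H →L[ℂ] H)) x, x⟫ : ℂ)
        simp only [ContinuousLinearMap.smul_apply, ContinuousLinearMap.one_apply]
        rw [RCLike.real_smul_eq_coe_smul (K := ℂ), inner_smul_left]
        simp only [RCLike.conj_ofReal]
        rw [RCLike.re_ofReal_mul]
        have := inner_self_nonneg (𝕜 := ℂ) (x := x)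
        positivity
    have hZpos : (S + ε • 1).IsPositive := hS.add hone
    have hSS : (S * S).IsPositive := by
      refine isPositive_def'.mpr ⟨?_, ?_⟩
      · show star (S * S) = S * S
        rw [star_mul, hS.isSelfAdjoint.star_eq]
      · intro x
        show 0 ≤ RCLike.re (⟪(S * S) x, x⟫ : ℂ)
        have e1 := ContinuousLinearMap.adjoint_inner_left S (S x) x
        rw [hS.isSelfAdjoint.adjoint_eq] at e1
        rw [ContinuousLinearMap.mul_apply, inner_re_symm, ← e1]
        exact inner_self_nonneg
    have hsmS : ((2 * ε) • S).IsPositive := by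
      refine isPositive_def'.mpr ⟨?_, ?_⟩
      · show star ((2 * ε) • S) = (2 * ε) • S
        rw [star_smul, hS.isSelfAdjoint.star_eq, star_trivial]
      · intro x
        show 0 ≤ RCLike.re (⟪((2 * ε) • S) x, x⟫ : ℂ)
        simp only [ContinuousLinearMap.smul_apply]
        rw [RCLike.real_smul_eq_coe_smul (K := ℂ), inner_smul_left]
        simp only [RCLike.conj_ofReal]
        rw [RCLike.re_ofReal_mul]
        have := hS.2 x
        have h2ε : (0:ℝ) ≤ 2 * ε := by linarith
        exact mul_nonneg h2ε this
    have hC : (S * S + (2 * ε) • S).IsPositive := hSS.add hsmS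
    have hZZ : (S + ε • 1) * (S + ε • 1)
        = ε ^ 2 • (1 : H →L[ℂ] H) + (S * S + (2 * ε) • S) := by
      simp only [add_mul, mul_add, smul_mul_assoc, mul_smul_comm, one_mul, mul_one, smul_smul]
      module
    exact heinz_aux _ V hZpos ε hε _ hC hZZ
  set F : ℝ → ℝ := fun ε =>
    ‖(S + ε • 1) * (S + ε • 1) * V + V * ((S + ε • 1) * (S + ε • 1))‖ / 2
      - ‖(S + ε • 1) * V * (S + ε • 1)‖ with hF
  have hFc : Continuous F := by
    have h1 : Continuous fun ε : ℝ => S + ε • (1 : H →L[ℂ] H) :=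
      continuous_const.add (continuous_id.smul continuous_const)
    apply Continuous.sub
    · exact (((((h1.mul h1).mul continuous_const)).add
        (continuous_const.mul (h1.mul h1))).norm).div_const 2
    · exact (((h1.mul continuous_const)).mul h1).norm
  have h0 : ∀ᶠ ε in 𝓝[>] (0:ℝ), 0 ≤ F ε := by
    filter_upwards [self_mem_nhdsWithin] with ε hε
    have := key ε hε
    rw [hF]
    dsimp only
    linarith
  have hlim : Tendsto F (𝓝[>] (0:ℝ)) (𝓝 (F 0)) :=
    (hFc.continuousAt).tendsto.mono_left nhdsWithin_le_nhds
  have hge : 0 ≤ F 0 := ge_of_tendsto hlim h0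
  rw [hF] at hge
  simp only [zero_smul, add_zero] at hge
  linarith

private lemma spectralRadius_mul_comm' {A : Type*} [NormedRing A] [NormedAlgebra ℂ A]
    (a b : A) : spectralRadius ℂ (a * b) = spectralRadius ℂ (b * a) := by
  have key : ∀ c d : A, spectralRadius ℂ (c * d) ≤ spectralRadius ℂ (d * c) := by
    intro c d
    show (⨆ k ∈ spectrum ℂ (c * d), (‖k‖₊ : ENNReal))
      ≤ ⨆ k ∈ spectrum ℂ (d * c), (‖k‖₊ : ENNReal)
    refine iSup₂_le fun k hk => ?_
    by_cases hk0 : k = 0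
    · simp [hk0]
    · have hmem : k ∈ spectrum ℂ (c * d) \ {0} := ⟨hk, hk0⟩
      rw [spectrum.nonzero_mul_comm] at hmem
      exact le_iSup₂ (f := fun k (_ : k ∈ spectrum ℂ (d * c)) => (‖k‖₊ : ENNReal)) k hmem.1
  exact le_antisymm (key a b) (key b a)

end HeinzAux

theorem aluthge_norm_le_mean_norm_le_norm {H : Type*} [NormedAddCommGroup H]
    [InnerProductSpace ℂ H] [CompleteSpace H] (T : H →L[ℂ] H) (P : PolarDecomp T)
    (S : H →L[ℂ] H) (hS : S.IsPositive) (hS2 : S * S = P.R) :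
    ‖S * P.V * S‖ ≤ ‖P.mean‖ ∧ ‖P.mean‖ ≤ ‖T‖ ∧
      spectralRadius ℂ T ≤ (‖P.mean‖₊ : ENNReal) := by
  have hmean : ‖P.mean‖ = ‖P.V * P.R + P.R * P.V‖ / 2 := by
    rw [PolarDecomp.mean, norm_smul]
    have h2c : ‖(2⁻¹ : ℂ)‖ = 2⁻¹ := by norm_num
    rw [h2c]
    ring
  -- Part 1
  have h1 : ‖S * P.V * S‖ ≤ ‖P.mean‖ := by
    have hh := heinz S P.V hS
    rw [hmean, ← hS2, add_comm (P.V * (S * S))]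
    exact hh
  -- norm of R equals norm of T
  have hnR : ‖P.R‖ = ‖T‖ := by
    have hc : ‖star P.R * P.R‖ = ‖P.R‖ * ‖P.R‖ := CStarRing.norm_star_mul_self
    rw [P.posR.isSelfAdjoint.star_eq, P.sqR] at hc
    have hc2 : ‖star T * T‖ = ‖T‖ * ‖T‖ := CStarRing.norm_star_mul_self
    have hst : (star T : H →L[ℂ] H) = adjoint T := rfl
    rw [hst] at hc2
    rw [hc2] at hc
    nlinarith [norm_nonneg P.R, norm_nonneg T]
  -- V is a contraction
  have hV1 : ‖P.V‖ ≤ 1 := by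
    set p : H →L[ℂ] H := adjoint P.V * P.V with hp_def
    have hidem : p * p = p := by
      have hassoc : p * p = adjoint P.V * (P.V * adjoint P.V * P.V) := by
        rw [hp_def]; noncomm_ring
      rw [hassoc, P.partIso]
    have hsa : star p = p := by
      rw [hp_def, star_mul,
        show (star P.V : H →L[ℂ] H) = adjoint P.V from rfl,
        show (star (adjoint P.V) : H →L[ℂ] H) = adjoint (adjoint P.V) from rfl,
        ContinuousLinearMap.adjoint_adjoint]
    have hpn : ‖p‖ * ‖p‖ = ‖p‖ := by
      have := CStarRing.norm_star_mul_self (x := p)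
      rw [hsa, hidem] at this
      linarith
    have hple : ‖p‖ ≤ 1 := by nlinarith [norm_nonneg p]
    have hVsq : ‖P.V‖ * ‖P.V‖ = ‖p‖ := by
      have := CStarRing.norm_star_mul_self (x := P.V)
      rw [show (star P.V : H →L[ℂ] H) = adjoint P.V from rfl] at this
      rw [hp_def]
      linarith
    nlinarith [norm_nonneg P.V]
  -- Part 2
  have h2 : ‖P.mean‖ ≤ ‖T‖ := by
    rw [hmean]
    have ha : ‖P.V * P.R‖ = ‖T‖ := by rw [← P.factor]
    have hb : ‖P.R * P.V‖ ≤ ‖T‖ := by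
      calc ‖P.R * P.V‖ ≤ ‖P.R‖ * ‖P.V‖ := norm_mul_le _ _
        _ ≤ ‖T‖ * 1 := mul_le_mul (le_of_eq hnR) hV1 (norm_nonneg _) (norm_nonneg _)
        _ = ‖T‖ := mul_one _
    have hadd := norm_add_le (P.V * P.R) (P.R * P.V)
    linarith
  refine ⟨h1, h2, ?_⟩
  -- Part 3
  rcases subsingleton_or_nontrivial H with hsub | hnt
  · haveI : Subsingleton (H →L[ℂ] H) :=
      ⟨fun a b => ContinuousLinearMap.ext fun x => Subsingleton.elim _ _⟩
    have hempty : spectrum ℂ T = ∅ := spectrum.of_subsingleton T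
    unfold spectralRadius
    rw [hempty]
    simp
  · have hfact : T = (P.V * S) * S := by
      conv_lhs => rw [P.factor, ← hS2]
      rw [mul_assoc]
    have hswap : spectralRadius ℂ T = spectralRadius ℂ (S * P.V * S) := by
      conv_lhs => rw [hfact]
      rw [spectralRadius_mul_comm' (P.V * S) S, ← mul_assoc]
    rw [hswap]
    refine le_trans (spectrum.spectralRadius_le_nnnorm (𝕜 := ℂ) _) ?_
    have : ‖S * P.V * S‖₊ ≤ ‖P.mean‖₊ := by exact_mod_cast h1
    exact_mod_cast ENNReal.coe_le_coe.mpr this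
end

section
/- Let V be a partial isometry on a Hilbert space. Then the mean transform of V is V̂ = (1/2)(I + V*V)V, and the spectrum of V̂ equals the spectrum of V. -/
open ContinuousLinearMap Filter Topology

set_option synthInstance.maxHeartbeats 1000000 in
set_option maxHeartbeats 1000000 in
theorem mean_transform_partial_isometry {H : Type*} [NormedAddCommGroup H]
    [InnerProductSpace ℂ H] [CompleteSpace H] (V : H →L[ℂ] H)
    (hV : V * adjoint V * V = V) (P : PolarDecomp V) :
    P.mean = (2⁻¹ : ℂ) • ((1 + adjoint V * V) * V) ∧
      spectrum ℂ P.mean = spectrum ℂ V := by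
  set Q : H →L[ℂ] H := adjoint V * V with hQ
  -- Q is idempotent
  have hQQ : Q * Q = Q := by
    rw [hQ, mul_assoc, ← mul_assoc V, hV]
  -- Q is positive
  have hQpos : (0 : H →L[ℂ] H) ≤ Q := by
    rw [nonneg_iff_isPositive]
    have := (isPositive_one (E := H) (𝕜 := ℂ)).adjoint_conj V
    simpa [hQ, mul_def, one_def] using this
  have hRpos : (0 : H →L[ℂ] H) ≤ P.R := (nonneg_iff_isPositive P.R).mpr P.posR
  -- R = Q  by uniqueness of positive square roots
  have hRQ : P.R = Q := by
    have h1 : CFC.sqrt Q = P.R := CFC.sqrt_unique (a := Q) P.sqR hRpos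
    have h2 : CFC.sqrt Q = Q := CFC.sqrt_unique hQQ hQpos
    rw [← h1, h2]
  -- V * Q = V
  have hVQ : V * Q = V := by
    rw [hQ, ← mul_assoc, hV]
  -- P.V = V
  have hPV : P.V = V := by
    ext x
    have hker : V ((1 - Q) x) = 0 := by
      have h0 : V * (1 - Q) = 0 := by rw [mul_sub, mul_one, hVQ, sub_self]
      calc V ((1 - Q) x) = (V * (1 - Q)) x := rfl
        _ = 0 := by rw [h0]; rfl
    have hkerP : P.V ((1 - Q) x) = 0 := by
      have hm : (1 - Q) x ∈ LinearMap.ker (P.V : H →ₗ[ℂ] H) := by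
        rw [P.kerV]; exact LinearMap.mem_ker.mpr hker
      exact hm
    have hfac : V x = P.V (Q x) := by
      have hf := P.factor
      rw [hRQ] at hf
      calc V x = (P.V * Q) x := by rw [← hf]
        _ = P.V (Q x) := rfl
    have hsplit : P.V x = P.V (Q x) + P.V ((1 - Q) x) := by
      rw [← map_add]; congr 1; simp
    rw [hsplit, hkerP, add_zero, ← hfac]
  -- first conjunct
  have hmean : P.mean = (2⁻¹ : ℂ) • ((1 + Q) * V) := by
    rw [PolarDecomp.mean, hRQ, hPV, hVQ, add_mul, one_mul]
  refine ⟨hmean, ?_⟩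
  -- the unit u = 2⁻¹ • (1 + Q), with inverse 2•1 - Q
  have hu1 : ((2⁻¹ : ℂ) • (1 + Q)) * ((2 : ℂ) • 1 - Q) = 1 := by
    rw [smul_mul_assoc]
    have h2 : (1 + Q) * ((2 : ℂ) • 1 - Q) = (2 : ℂ) • 1 := by
      rw [add_mul, one_mul, mul_sub, mul_smul_comm, mul_one, hQQ]
      module
    rw [h2, smul_smul]
    norm_num
  have hu2 : ((2 : ℂ) • 1 - Q) * ((2⁻¹ : ℂ) • (1 + Q)) = 1 := by
    rw [mul_smul_comm]
    have h2 : ((2 : ℂ) • 1 - Q) * (1 + Q) = (2 : ℂ) • 1 := by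
      rw [sub_mul, smul_mul_assoc, one_mul, mul_add, mul_one, hQQ]
      module
    rw [h2, smul_smul]
    norm_num
  let u : (H →L[ℂ] H)ˣ := ⟨(2⁻¹ : ℂ) • (1 + Q), (2 : ℂ) • 1 - Q, hu1, hu2⟩
  have hVu : V * (u⁻¹ : (H →L[ℂ] H)ˣ) = V := by
    show V * ((2 : ℂ) • 1 - Q) = V
    rw [mul_sub, mul_smul_comm, mul_one, hVQ, two_smul, add_sub_cancel_right]
  have hconj : P.mean = (u : H →L[ℂ] H) * V * (u⁻¹ : (H →L[ℂ] H)ˣ) := by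
    rw [mul_assoc, hVu, hmean]
    show (2⁻¹ : ℂ) • ((1 + Q) * V) = ((2⁻¹ : ℂ) • (1 + Q)) * V
    rw [smul_mul_assoc]
  rw [hconj]
  exact spectrum.units_conjugate
end

section
/- Let T ∈ B(H) satisfy T² = 0. Then the n-th mean transform iterate satisfies T̂^{(n)} = T/2ⁿ for all n, and hence the mean limit ℓ(T) = lim_n ‖T̂^{(n)}‖ equals 0. -/
open ContinuousLinearMap Filter Topology

open scoped Classical in
noncomputable def meanTransform {H : Type*} [NormedAddCommGroup H] [InnerProductSpace ℂ H]
    [CompleteSpace H] (T : H →L[ℂ] H) : H →L[ℂ] H :=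
  if h : Nonempty (PolarDecomp T) then h.some.mean else 0

section Aux

variable {H : Type*} [NormedAddCommGroup H] [InnerProductSpace ℂ H] [CompleteSpace H]

local notation "⟪" x ", " y "⟫" => @inner ℂ _ _ x y

/-- If `R` is selfadjoint with `R * R = T* T` then `‖R x‖ = ‖T x‖`. -/
lemma aux_norm_eq {R T : H →L[ℂ] H} (hsa : IsSelfAdjoint R)
    (hsq : R * R = adjoint T * T) (x : H) : ‖R x‖ = ‖T x‖ := by
  have hadj : adjoint R = R := by rw [← star_eq_adjoint]; exact hsa
  have h1 : (⟪R x, R x⟫ : ℂ) = ⟪T x, T x⟫ := by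
    have h2 : (⟪(R * R) x, x⟫ : ℂ) = ⟪(adjoint T * T) x, x⟫ := by rw [hsq]
    calc (⟪R x, R x⟫ : ℂ) = ⟪adjoint R (R x), x⟫ := by rw [adjoint_inner_left]
    _ = ⟪(adjoint T * T) x, x⟫ := by rw [hadj, ← ContinuousLinearMap.mul_apply, h2]
    _ = ⟪adjoint T (T x), x⟫ := rfl
    _ = ⟪T x, T x⟫ := by rw [adjoint_inner_left]
  have h3 : ‖R x‖ ^ 2 = ‖T x‖ ^ 2 := by
    rw [← inner_self_eq_norm_sq (𝕜 := ℂ), ← inner_self_eq_norm_sq (𝕜 := ℂ), h1]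
  rw [← Real.sqrt_sq (norm_nonneg (R x)), ← Real.sqrt_sq (norm_nonneg (T x)), h3]

lemma aux_ker_eq {R T : H →L[ℂ] H} (h : ∀ x, ‖R x‖ = ‖T x‖) :
    LinearMap.ker (R : H →ₗ[ℂ] H) = LinearMap.ker (T : H →ₗ[ℂ] H) := by
  ext x
  simp only [LinearMap.mem_ker, ContinuousLinearMap.coe_coe]
  rw [← norm_eq_zero, h x]
  exact norm_eq_zero

/-- The orthogonal complement of the range of a selfadjoint operator is its kernel. -/
lemma aux_orth_range {R : H →L[ℂ] H} (hsa : IsSelfAdjoint R) :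
    (LinearMap.range (R : H →ₗ[ℂ] H))ᗮ = LinearMap.ker (R : H →ₗ[ℂ] H) := by
  have hadj : adjoint R = R := by rw [← star_eq_adjoint]; exact hsa
  ext x
  rw [Submodule.mem_orthogonal, LinearMap.mem_ker]
  constructor
  · intro h
    have h1 : (⟪R x, R x⟫ : ℂ) = 0 := by
      have := h (R (R x)) (LinearMap.mem_range_self _ _)
      calc (⟪R x, R x⟫ : ℂ) = ⟪adjoint R (R x), x⟫ := by rw [adjoint_inner_left]
      _ = ⟪R (R x), x⟫ := by rw [hadj]
      _ = 0 := this
    exact inner_self_eq_zero.mp h1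
  · rintro h y ⟨z, rfl⟩
    calc (⟪R z, x⟫ : ℂ) = ⟪adjoint R z, x⟫ := by rw [hadj]
    _ = ⟪z, R x⟫ := by rw [adjoint_inner_left]
    _ = 0 := by rw [show R x = 0 from h, inner_zero_right]

theorem polar_nonempty (T : H →L[ℂ] H) : Nonempty (PolarDecomp T) := by
  have hTT : (0 : H →L[ℂ] H) ≤ adjoint T * T := by
    simpa [star_eq_adjoint] using star_mul_self_nonneg T
  set R : H →L[ℂ] H := CFC.sqrt (adjoint T * T) with hRdef
  have hRpos : (0 : H →L[ℂ] H) ≤ R := CFC.sqrt_nonneg _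
  have hRP : R.IsPositive := (nonneg_iff_isPositive R).mp hRpos
  have hsq : R * R = adjoint T * T := CFC.sqrt_mul_sqrt_self _ hTT
  have hsa : IsSelfAdjoint R := hRP.isSelfAdjoint
  have hnorm : ∀ x, ‖R x‖ = ‖T x‖ := aux_norm_eq hsa hsq
  have hker : LinearMap.ker (R : H →ₗ[ℂ] H) = LinearMap.ker (T : H →ₗ[ℂ] H) := aux_ker_eq hnorm
  set S : Submodule ℂ H := LinearMap.range (R : H →ₗ[ℂ] H) with hSdef
  have hSrange : S = LinearMap.range (R : H →ₗ[ℂ] H) := by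
    ext y; simp [hSdef]
  set Sc : Submodule ℂ H := S.topologicalClosure with hScdef
  -- the densely defined isometry `R x ↦ T x` on the range of `R`
  have hle : LinearMap.ker (R : H →ₗ[ℂ] H) ≤ LinearMap.ker (T : H →ₗ[ℂ] H) := by
    intro x hx
    have : R x = 0 := hx
    have : x ∈ LinearMap.ker (R : H →ₗ[ℂ] H) := this
    rw [hker] at this
    exact this
  set φ : S →ₗ[ℂ] H :=
    (Submodule.liftQ (LinearMap.ker (R : H →ₗ[ℂ] H)) (T : H →ₗ[ℂ] H) hle) ∘ₗ
      ((LinearMap.quotKerEquivRange (R : H →ₗ[ℂ] H)).symm : S →ₗ[ℂ] _) with hφdef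
  have hφ : ∀ (x : H) (hx : R x ∈ S), φ ⟨R x, hx⟩ = T x := by
    intro x hx
    have h1 : (LinearMap.quotKerEquivRange (R : H →ₗ[ℂ] H)).symm ⟨R x, hx⟩ =
        Submodule.Quotient.mk x := by
      rw [LinearEquiv.symm_apply_eq]
      exact Subtype.ext (LinearMap.quotKerEquivRange_apply_mk _ x).symm
    simp only [hφdef, LinearMap.comp_apply, LinearEquiv.coe_coe, h1, Submodule.liftQ_apply]
    rfl
  have hφiso : ∀ s : S, ‖φ s‖ = ‖s‖ := by
    rintro ⟨y, x, rfl⟩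
    show ‖φ ⟨R x, ⟨x, rfl⟩⟩‖ = ‖(⟨R x, ⟨x, rfl⟩⟩ : S)‖
    rw [hφ x ⟨x, rfl⟩]
    exact (hnorm x).symm
  set ψ : S →ₗᵢ[ℂ] H := ⟨φ, hφiso⟩ with hψdef
  -- inclusion of `S` into its closure
  set eli : S →ₗᵢ[ℂ] Sc := ⟨Submodule.inclusion S.le_topologicalClosure, fun _ => rfl⟩
  set e : S →L[ℂ] Sc := eli.toContinuousLinearMap with hedef
  have h_dense : DenseRange e := by
    intro y
    rw [closure_subtype]
    have h1 : (y : H) ∈ closure (S : Set H) := by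
      have := y.2
      rwa [← Submodule.topologicalClosure_coe]
    refine closure_mono ?_ h1
    rintro z hz
    exact ⟨e ⟨z, hz⟩, ⟨⟨z, hz⟩, rfl⟩, rfl⟩
  have h_e : IsUniformInducing e := eli.isometry.isUniformInducing
  set V₀ : Sc →L[ℂ] H := ψ.toContinuousLinearMap.extend e with hV₀def
  have hV₀e : ∀ s : S, V₀ (e s) = φ s := fun s =>
    ContinuousLinearMap.extend_eq _ h_dense h_e s
  have hV₀iso : ∀ y : Sc, ‖V₀ y‖ = ‖y‖ := by
    intro y
    refine h_dense.induction_on y (isClosed_eq V₀.continuous.norm continuous_norm) ?_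
    intro s
    rw [hV₀e s]
    exact hφiso s
  set V₀li : Sc →ₗᵢ[ℂ] H := ⟨V₀.toLinearMap, hV₀iso⟩ with hV₀lidef
  set V : H →L[ℂ] H := V₀.comp (Submodule.orthogonalProjectionOnto Sc) with hVdef
  have hVR : ∀ x, V (R x) = T x := by
    intro x
    have hmem : R x ∈ Sc := S.le_topologicalClosure ⟨x, rfl⟩
    have h1 : Submodule.orthogonalProjectionOnto Sc (R x) = ⟨R x, hmem⟩ :=
      Submodule.orthogonalProjectionOnto_mem_subspace_eq_self (⟨R x, hmem⟩ : Sc)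
    have h2 : (⟨R x, hmem⟩ : Sc) = e ⟨R x, ⟨x, rfl⟩⟩ := rfl
    rw [ContinuousLinearMap.comp_apply, h1, h2, hV₀e]
    exact hφ x _
  have hVapp : ∀ x, V x = V₀ (Submodule.orthogonalProjectionOnto Sc x) := fun x => rfl
  have hScorth : Scᗮ = LinearMap.ker (T : H →ₗ[ℂ] H) := by
    have h1 : Scᗮ = Sᗮ := by
      rw [hScdef, ← Submodule.orthogonal_orthogonal_eq_closure,
        Submodule.orthogonal_orthogonal_eq_closure]
      exact S.isClosed_orthogonal.submodule_topologicalClosure_eq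
    rw [h1, hSrange, aux_orth_range hsa, hker]
  have hkerV : LinearMap.ker (V : H →ₗ[ℂ] H) = LinearMap.ker (T : H →ₗ[ℂ] H) := by
    ext x
    simp only [LinearMap.mem_ker, ContinuousLinearMap.coe_coe]
    have h1 : V x = 0 ↔ Submodule.orthogonalProjectionOnto Sc x = 0 := by
      constructor
      · intro h
        apply V₀li.injective
        rw [map_zero]
        exact h
      · intro h
        rw [hVapp, h, map_zero]
    rw [h1, Submodule.orthogonalProjectionOnto_eq_zero_iff, hScorth]
    exact Iff.rfl.trans (by rw [LinearMap.mem_ker, ContinuousLinearMap.coe_coe])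
  have hadjVV : adjoint V ∘L V = Sc.subtypeL ∘L (Submodule.orthogonalProjectionOnto Sc) := by
    refine ContinuousLinearMap.ext fun x => ?_
    refine ext_inner_right ℂ fun y => ?_
    calc (⟪adjoint V (V x), y⟫ : ℂ) = ⟪V x, V y⟫ := by rw [adjoint_inner_left]
    _ = ⟪V₀li (Submodule.orthogonalProjectionOnto Sc x), V₀li (Submodule.orthogonalProjectionOnto Sc y)⟫ := rfl
    _ = ⟪Submodule.orthogonalProjectionOnto Sc x, Submodule.orthogonalProjectionOnto Sc y⟫ := V₀li.inner_map_map _ _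
    _ = ⟪(Submodule.orthogonalProjectionOnto Sc x : H), y⟫ :=
      Submodule.inner_orthogonalProjectionOnto_eq_of_mem_left (K := Sc) _ y
    _ = ⟪(Sc.subtypeL ∘L Submodule.orthogonalProjectionOnto Sc) x, y⟫ := rfl
  have hpartIso : V * adjoint V * V = V := by
    rw [mul_assoc]
    have h2 : adjoint V * V = Sc.subtypeL ∘L (Submodule.orthogonalProjectionOnto Sc) := hadjVV
    rw [h2]
    refine ContinuousLinearMap.ext fun x => ?_
    have h3 : Submodule.orthogonalProjectionOnto Sc ((Submodule.orthogonalProjectionOnto Sc x : H)) =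
        Submodule.orthogonalProjectionOnto Sc x :=
      Submodule.orthogonalProjectionOnto_mem_subspace_eq_self _
    calc (V * (Sc.subtypeL ∘L Submodule.orthogonalProjectionOnto Sc)) x
        = V₀ (Submodule.orthogonalProjectionOnto Sc ((Submodule.orthogonalProjectionOnto Sc x : H))) := rfl
    _ = V₀ (Submodule.orthogonalProjectionOnto Sc x) := by rw [h3]
    _ = V x := rfl
  exact ⟨⟨V, R, hRP, hsq, hpartIso, hkerV,
    ContinuousLinearMap.ext fun x => (hVR x).symm⟩⟩

/-- For a square-zero operator, any polar decomposition has `R * V = 0`, hence the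
mean transform halves the operator. -/
lemma polar_mean_eq {T : H →L[ℂ] H} (hT : T * T = 0) (P : PolarDecomp T) :
    P.mean = (2⁻¹ : ℂ) • T := by
  obtain ⟨V, R, posR, sqR, partIso, kerV, factor⟩ := P
  have hsa : IsSelfAdjoint R := posR.isSelfAdjoint
  have hnorm : ∀ x, ‖R x‖ = ‖T x‖ := aux_norm_eq hsa sqR
  have hkerR : LinearMap.ker (R : H →ₗ[ℂ] H) = LinearMap.ker (T : H →ₗ[ℂ] H) := aux_ker_eq hnorm
  -- every `V x` lies in the closure of the range of `T`
  have hQ : ∀ x, V ((adjoint V * V) x) = V x := by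
    intro x
    have := congrArg (fun A => A x) partIso
    simpa [mul_assoc, ContinuousLinearMap.mul_apply] using this
  have hQmem : ∀ x, (adjoint V * V) x ∈ (LinearMap.range (R : H →ₗ[ℂ] H)).topologicalClosure := by
    intro x
    rw [← Submodule.orthogonal_orthogonal_eq_closure, aux_orth_range hsa]
    intro z hz
    have hz' : V z = 0 := by
      have h0 : z ∈ LinearMap.ker (R : H →ₗ[ℂ] H) := hz
      rw [hkerR, ← kerV, LinearMap.mem_ker] at h0
      exact h0
    calc (⟪z, (adjoint V * V) x⟫ : ℂ) = ⟪z, adjoint V (V x)⟫ := rfl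
    _ = ⟪V z, V x⟫ := adjoint_inner_right V z (V x)
    _ = 0 := by rw [hz', inner_zero_left]
  have hrangeT : ∀ x, T x ∈ LinearMap.ker (T : H →ₗ[ℂ] H) := by
    intro x
    rw [LinearMap.mem_ker, ContinuousLinearMap.coe_coe, ← ContinuousLinearMap.mul_apply, hT]
    rfl
  have hTV : ∀ x, T (V x) = 0 := by
    intro x
    have h1 : V x ∈ closure ((LinearMap.range (T : H →ₗ[ℂ] H) : Submodule ℂ H) : Set H) := by
      rw [← hQ x]
      have h2 : ((adjoint V * V) x : H) ∈ closure ((LinearMap.range (R : H →ₗ[ℂ] H) : Submodule ℂ H) : Set H) := by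
        have := hQmem x
        rwa [← Submodule.topologicalClosure_coe]
      have h3 : V ((adjoint V * V) x) ∈ V '' closure ((LinearMap.range (R : H →ₗ[ℂ] H) : Submodule ℂ H) : Set H) :=
        Set.mem_image_of_mem _ h2
      have h4 := image_closure_subset_closure_image (f := V)
        (s := ((LinearMap.range (R : H →ₗ[ℂ] H) : Submodule ℂ H) : Set H)) V.continuous h3
      refine closure_mono ?_ h4
      rintro w ⟨u, ⟨v, rfl⟩, rfl⟩
      refine ⟨v, ?_⟩
      rw [factor]; rfl
    have h5 : closure ((LinearMap.range (T : H →ₗ[ℂ] H) : Submodule ℂ H) : Set H) ⊆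
        ((LinearMap.ker (T : H →ₗ[ℂ] H) : Submodule ℂ H) : Set H) := by
      apply (ContinuousLinearMap.isClosed_ker T).closure_subset_iff.mpr
      rintro w ⟨v, rfl⟩
      exact hrangeT v
    exact h5 h1
  have hRV : R.comp V = 0 := by
    refine ContinuousLinearMap.ext fun x => ?_
    have : ‖R (V x)‖ = 0 := by rw [hnorm, hTV, norm_zero]
    simpa [norm_eq_zero] using this
  show (2⁻¹ : ℂ) • (V * R + R * V) = (2⁻¹ : ℂ) • T
  have hRV' : R * V = 0 := hRV
  rw [hRV', add_zero, ← factor]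

lemma meanTransform_of_sq_zero (T : H →L[ℂ] H) (hT : T * T = 0) :
    meanTransform T = (2⁻¹ : ℂ) • T := by
  rw [meanTransform, dif_pos (polar_nonempty T)]
  exact polar_mean_eq hT _

end Aux

theorem mean_iterates_of_square_zero {H : Type*} [NormedAddCommGroup H]
    [InnerProductSpace ℂ H] [CompleteSpace H] (T : H →L[ℂ] H) (hT : T * T = 0) :
    (∀ n : ℕ, meanTransform^[n] T = ((2 : ℂ) ^ n)⁻¹ • T) ∧
      Tendsto (fun n : ℕ => ‖meanTransform^[n] T‖) atTop (nhds 0) := by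
  have hsq : ∀ c : ℂ, (c • T) * (c • T) = 0 := by
    intro c
    rw [smul_mul_assoc, mul_smul_comm, hT, smul_zero, smul_zero]
  have key : ∀ n : ℕ, meanTransform^[n] T = ((2 : ℂ) ^ n)⁻¹ • T := by
    intro n
    induction n with
    | zero => simp
    | succ n ih =>
      rw [Function.iterate_succ_apply', ih, meanTransform_of_sq_zero _ (hsq _),
        smul_smul]
      congr 1
      rw [pow_succ, mul_inv, mul_comm]
  refine ⟨key, ?_⟩
  have hnorm : ∀ n : ℕ, ‖meanTransform^[n] T‖ = (2⁻¹ : ℝ) ^ n * ‖T‖ := by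
    intro n
    have h2 : ‖(2 : ℂ)‖ = 2 := by simp
    rw [key n, norm_smul, norm_inv, norm_pow, h2, ← inv_pow]
  rw [show (0 : ℝ) = 0 * ‖T‖ by ring]
  refine Tendsto.congr (fun n => (hnorm n).symm) ?_
  exact (tendsto_pow_atTop_nhds_zero_of_lt_one (by norm_num) (by norm_num)).mul_const _
end

section
/- Let x, y be nonzero vectors in a Hilbert space and T = x ⊗ y the rank one operator (x ⊗ y)(u) = ⟨u, y⟩ x. Then the mean transform of T is T̂ = (1/2)(x + (⟨x,y⟩/‖y‖²) y) ⊗ y. -/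
open ContinuousLinearMap Filter Topology

noncomputable def rankOne {H : Type*} [NormedAddCommGroup H] [InnerProductSpace ℂ H]
    (x y : H) : H →L[ℂ] H :=
  (ContinuousLinearMap.toSpanSingleton ℂ x).comp (innerSL ℂ y)

set_option synthInstance.maxHeartbeats 1000000
set_option maxHeartbeats 1000000

lemma rankOne_apply {H : Type*} [NormedAddCommGroup H] [InnerProductSpace ℂ H]
    (x y u : H) : rankOne x y u = (inner ℂ y u : ℂ) • x := rfl

lemma rankOne_adjoint {H : Type*} [NormedAddCommGroup H] [InnerProductSpace ℂ H]
    [CompleteSpace H] (x y : H) : adjoint (rankOne x y) = rankOne y x := by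
  symm
  rw [eq_adjoint_iff]
  intro u v
  simp only [rankOne_apply, inner_smul_left, inner_smul_right, inner_conj_symm]
  ring

lemma rankOne_isPositive_smul {H : Type*} [NormedAddCommGroup H] [InnerProductSpace ℂ H]
    [CompleteSpace H] (y : H) (c : ℝ) (hc : 0 ≤ c) :
    ((c : ℂ) • rankOne y y).IsPositive := by
  rw [isPositive_iff_complex]
  intro u
  have : (inner ℂ (((c:ℂ) • rankOne y y) u) u : ℂ) = ((c * Complex.normSq (inner ℂ y u) : ℝ) : ℂ) := by
    simp only [ContinuousLinearMap.smul_apply, rankOne_apply, inner_smul_left, inner_smul_right, Complex.conj_ofReal]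
    rw [Complex.ofReal_mul, Complex.normSq_eq_conj_mul_self]
  rw [this]
  refine ⟨by simp, ?_⟩
  have h2 : RCLike.re ((c * Complex.normSq (inner ℂ y u) : ℝ) : ℂ) = c * Complex.normSq (inner ℂ y u) :=
    Complex.ofReal_re _
  rw [h2]
  exact mul_nonneg hc (Complex.normSq_nonneg _)

theorem mean_transform_rank_one {H : Type*} [NormedAddCommGroup H] [InnerProductSpace ℂ H]
    [CompleteSpace H] (x y : H) (hx : x ≠ 0) (hy : y ≠ 0)
    (P : PolarDecomp (rankOne x y)) :
    P.mean = rankOne ((2⁻¹ : ℂ) • (x + ((inner ℂ y x : ℂ) / (‖y‖ : ℂ) ^ 2) • y)) y := by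
  have hnx : (‖x‖ : ℂ) ≠ 0 := by
    simpa using norm_ne_zero_iff.mpr hx
  have hny : (‖y‖ : ℂ) ≠ 0 := by
    simpa using norm_ne_zero_iff.mpr hy
  set c : ℝ := ‖x‖ / ‖y‖ with hc
  have hc0 : 0 ≤ c := by positivity
  have hcC : (c : ℂ) = (‖x‖ : ℂ) / (‖y‖ : ℂ) := by push_cast [hc]; ring
  set R₀ : H →L[ℂ] H := (c : ℂ) • rankOne y y with hR₀
  have hyy : (inner ℂ y y : ℂ) = (‖y‖ : ℂ) ^ 2 := inner_self_eq_norm_sq_to_K y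
  have hxx : (inner ℂ x x : ℂ) = (‖x‖ : ℂ) ^ 2 := inner_self_eq_norm_sq_to_K x
  -- `R₀` is the positive square root of `T* T`
  have hsq : R₀ * R₀ = adjoint (rankOne x y) * rankOne x y := by
    ext u
    rw [rankOne_adjoint]
    simp only [ContinuousLinearMap.mul_apply, hR₀, ContinuousLinearMap.smul_apply, rankOne_apply, inner_smul_right, map_smul, smul_smul]
    congr 1
    rw [hyy, hxx, hcC]
    field_simp
  have hRR : P.R = R₀ := by
    have h1 : 0 ≤ P.R := (nonneg_iff_isPositive _).mpr P.posR
    have h2 : 0 ≤ R₀ := (nonneg_iff_isPositive _).mpr (rankOne_isPositive_smul y c hc0)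
    have h : P.R * P.R = R₀ * R₀ := by rw [P.sqR, hsq]
    rw [← CFC.sqrt_unique (A := H →L[ℂ] H) h h1, CFC.sqrt_mul_self (A := H →L[ℂ] H) R₀ h2]
  -- value of V on y
  have hVy : P.V y = ((‖y‖ : ℂ) / (‖x‖ : ℂ)) • x := by
    have h := congrArg (fun f : H →L[ℂ] H => f y) P.factor
    simp only [ContinuousLinearMap.mul_apply, hRR, hR₀, ContinuousLinearMap.smul_apply, rankOne_apply, map_smul, smul_smul] at h
    rw [hyy, hcC] at h
    have h2 := congrArg (fun v => ((‖y‖ : ℂ) / (‖x‖ : ℂ) / (‖y‖ : ℂ) ^ 2) • v) h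
    simp only [smul_smul] at h2
    rw [show (‖y‖:ℂ) / ‖x‖ / (‖y‖:ℂ)^2 * (‖y‖:ℂ)^2 = (‖y‖:ℂ)/‖x‖ by field_simp,
      show (‖y‖:ℂ) / ‖x‖ / (‖y‖:ℂ)^2 * ((‖x‖:ℂ)/‖y‖ * (‖y‖:ℂ)^2) = 1 by field_simp] at h2
    simpa using h2.symm
  -- value of V in general
  have hVu : ∀ u : H, P.V u = ((inner ℂ y u : ℂ) / (‖y‖ : ℂ) ^ 2) • P.V y := by
    intro u
    have hw : rankOne x y (u - ((inner ℂ y u : ℂ) / (‖y‖ : ℂ) ^ 2) • y) = 0 := by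
      simp only [rankOne_apply, inner_sub_right, inner_smul_right, hyy]
      rw [show (inner ℂ y u : ℂ) - (inner ℂ y u : ℂ) / (‖y‖:ℂ)^2 * (‖y‖:ℂ)^2 = 0 by field_simp; ring]
      simp
    have hker : (u - ((inner ℂ y u : ℂ) / (‖y‖ : ℂ) ^ 2) • y) ∈ LinearMap.ker (P.V : H →ₗ[ℂ] H) := by
      rw [P.kerV]
      exact LinearMap.mem_ker.mpr hw
    have hVw : P.V (u - ((inner ℂ y u : ℂ) / (‖y‖ : ℂ) ^ 2) • y) = 0 := LinearMap.mem_ker.mp hker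
    rw [map_sub, map_smul, sub_eq_zero] at hVw
    exact hVw
  ext u
  have h1 : P.V (P.R u) = (inner ℂ y u : ℂ) • x := by
    have h := congrArg (fun f : H →L[ℂ] H => f u) P.factor
    simp only [ContinuousLinearMap.mul_apply, rankOne_apply] at h
    exact h.symm
  have h2 : P.R (P.V u) = ((inner ℂ y u : ℂ) * (inner ℂ y x : ℂ) / (‖y‖ : ℂ) ^ 2) • y := by
    rw [hVu u, hVy, hRR]
    simp only [hR₀, map_smul, ContinuousLinearMap.smul_apply, rankOne_apply, smul_smul]
    congr 1
    rw [hcC]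
    field_simp
  simp only [PolarDecomp.mean, ContinuousLinearMap.smul_apply, add_apply, ContinuousLinearMap.mul_apply, h1, h2, rankOne_apply]
  simp only [smul_add, smul_smul]
  module
end

section
/- Let T ∈ B(H) with canonical polar decomposition T = V|T|. The following are equivalent: (1) N(T*) ⊆ N(T); (2) VV*|T| = |T|VV* = |T|; (3) V* is quasinormal, i.e., V V* V* = V*. -/
open ContinuousLinearMap Filter Topology
open scoped InnerProductSpace

section Aux
variable {H : Type*} [NormedAddCommGroup H] [InnerProductSpace ℂ H] [CompleteSpace H]

private lemma adj_mul' (A B : H →L[ℂ] H) : adjoint (A * B) = adjoint B * adjoint A := by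
  rw [← star_eq_adjoint, star_mul, star_eq_adjoint, star_eq_adjoint]

private lemma proj_fix' {S : H →L[ℂ] H} (hsa : adjoint S = S) (hid : S * S = S)
    {x : H} (hx : x ∈ (LinearMap.ker (S : H →ₗ[ℂ] H))ᗮ) : S x = x := by
  have h1 : S (S x) = S x := by rw [← ContinuousLinearMap.mul_apply, hid]
  have hker : x - S x ∈ LinearMap.ker (S : H →ₗ[ℂ] H) := by
    rw [LinearMap.mem_ker, ContinuousLinearMap.coe_coe, map_sub, h1, sub_self]
  have hmem : S x ∈ (LinearMap.ker (S : H →ₗ[ℂ] H))ᗮ := by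
    rw [Submodule.mem_orthogonal]
    intro y hy
    rw [← adjoint_inner_left, hsa, (by simpa only [ContinuousLinearMap.coe_coe] using LinearMap.mem_ker.mp hy : S y = 0), inner_zero_left]
  have horth : x - S x ∈ (LinearMap.ker (S : H →ₗ[ℂ] H))ᗮ := Submodule.sub_mem _ hx hmem
  have h0 : (⟪x - S x, x - S x⟫_ℂ) = 0 :=
    (Submodule.mem_orthogonal _ _).mp horth _ hker
  have h2 : x - S x = 0 := inner_self_eq_zero.mp h0
  exact (sub_eq_zero.mp h2).symm

end Aux

set_option maxHeartbeats 1000000 in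
theorem ker_adjoint_subset_tfae {H : Type*} [NormedAddCommGroup H] [InnerProductSpace ℂ H]
    [CompleteSpace H] (T : H →L[ℂ] H) (P : PolarDecomp T) :
    ((LinearMap.ker (adjoint T : H →ₗ[ℂ] H) ≤ LinearMap.ker (T : H →ₗ[ℂ] H)) ↔
      (P.V * adjoint P.V * P.R = P.R ∧ P.R * (P.V * adjoint P.V) = P.R)) ∧
    ((LinearMap.ker (adjoint T : H →ₗ[ℂ] H) ≤ LinearMap.ker (T : H →ₗ[ℂ] H)) ↔
      (P.V * adjoint P.V * adjoint P.V = adjoint P.V)) := by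
  have hR : adjoint P.R = P.R := by
    rw [← star_eq_adjoint]; exact P.posR.isSelfAdjoint
  have hTadj : adjoint T = P.R * adjoint P.V := by
    conv_lhs => rw [P.factor]
    rw [adj_mul', hR]
  -- inner product identity
  have h1 : ∀ x : H, (⟪P.R x, P.R x⟫_ℂ) = ⟪T x, T x⟫_ℂ := by
    intro x
    have k2 : (⟪x, (P.R * P.R) x⟫_ℂ) = ⟪P.R x, P.R x⟫_ℂ := by
      rw [ContinuousLinearMap.mul_apply, ← adjoint_inner_left, hR]
    have k1 : (⟪x, (adjoint T * T) x⟫_ℂ) = ⟪T x, T x⟫_ℂ := by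
      rw [ContinuousLinearMap.mul_apply, adjoint_inner_right]
    rw [← k2, P.sqR, k1]
  have hkerR : LinearMap.ker (P.R : H →ₗ[ℂ] H) = LinearMap.ker (T : H →ₗ[ℂ] H) := by
    ext x
    simp only [LinearMap.mem_ker, ContinuousLinearMap.coe_coe]
    constructor
    · intro h
      have := h1 x
      rw [h, inner_zero_left] at this
      exact inner_self_eq_zero.mp this.symm
    · intro h
      have := h1 x
      rw [h, inner_zero_left] at this
      exact inner_self_eq_zero.mp this
  -- partial isometry facts
  have hadj : adjoint P.V * (P.V * adjoint P.V) = adjoint P.V := by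
    have h := congrArg adjoint P.partIso
    rwa [adj_mul', adj_mul', adjoint_adjoint] at h
  have hP1sa : adjoint (P.V * adjoint P.V) = P.V * adjoint P.V := by
    rw [adj_mul', adjoint_adjoint]
  have hP1idem : (P.V * adjoint P.V) * (P.V * adjoint P.V) = P.V * adjoint P.V := by
    rw [← mul_assoc, P.partIso]
  have hQsa : adjoint (adjoint P.V * P.V) = adjoint P.V * P.V := by
    rw [adj_mul', adjoint_adjoint]
  have hQidem : (adjoint P.V * P.V) * (adjoint P.V * P.V) = adjoint P.V * P.V := by
    rw [mul_assoc, ← mul_assoc P.V, P.partIso]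
  -- pointwise forms
  have hadjp : ∀ y, adjoint P.V (P.V (adjoint P.V y)) = adjoint P.V y := by
    intro y
    have := congrArg (fun f : H →L[ℂ] H => f y) hadj
    simpa [ContinuousLinearMap.mul_apply] using this
  have hkerP1 : ∀ y, (P.V * adjoint P.V) y = 0 → adjoint P.V y = 0 := by
    intro y h
    have h' : P.V (adjoint P.V y) = 0 := by
      rw [← ContinuousLinearMap.mul_apply, h]
    rw [← hadjp y, h', map_zero]
  -- ker(V V†) = ker (adjoint T)
  have hker_eq : LinearMap.ker ((P.V * adjoint P.V : H →L[ℂ] H) : H →ₗ[ℂ] H) = LinearMap.ker ((adjoint T : H →L[ℂ] H) : H →ₗ[ℂ] H) := by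
    ext y
    simp only [LinearMap.mem_ker, ContinuousLinearMap.coe_coe]
    constructor
    · intro h
      rw [hTadj, ContinuousLinearMap.mul_apply, hkerP1 y h, map_zero]
    · intro h
      rw [hTadj, ContinuousLinearMap.mul_apply] at h
      have hv : adjoint P.V y ∈ LinearMap.ker (P.V : H →ₗ[ℂ] H) := by
        rw [P.kerV, ← hkerR, LinearMap.mem_ker]
        exact h
      rw [ContinuousLinearMap.mul_apply, (by simpa only [ContinuousLinearMap.coe_coe] using LinearMap.mem_ker.mp hv : P.V (adjoint P.V y) = 0)]
  -- implications
  have hAB : (LinearMap.ker ((adjoint T : H →L[ℂ] H) : H →ₗ[ℂ] H) ≤ LinearMap.ker (T : H →ₗ[ℂ] H)) →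
      P.V * adjoint P.V * P.R = P.R := by
    intro hA
    ext x
    rw [ContinuousLinearMap.mul_apply]
    refine proj_fix' hP1sa hP1idem ?_
    rw [Submodule.mem_orthogonal]
    intro y hy
    have hTy : adjoint T y = 0 := LinearMap.mem_ker.mp (hker_eq ▸ hy)
    have hTy2 : T y = 0 := LinearMap.mem_ker.mp (hA (LinearMap.mem_ker.mpr hTy))
    have hRy : P.R y = 0 := by
      have : y ∈ LinearMap.ker (P.R : H →ₗ[ℂ] H) := by rw [hkerR, LinearMap.mem_ker]; exact hTy2
      exact LinearMap.mem_ker.mp this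
    rw [← adjoint_inner_left, hR, hRy, inner_zero_left]
  have hsecond : ∀ h1' : P.V * adjoint P.V * P.R = P.R,
      P.R * (P.V * adjoint P.V) = P.R := by
    intro h1'
    have h := congrArg adjoint h1'
    rwa [adj_mul', hR, hP1sa] at h
  have hBA : (P.R * (P.V * adjoint P.V) = P.R) →
      LinearMap.ker ((adjoint T : H →L[ℂ] H) : H →ₗ[ℂ] H) ≤ LinearMap.ker (T : H →ₗ[ℂ] H) := by
    intro h2 x hx
    rw [LinearMap.mem_ker, ContinuousLinearMap.coe_coe] at hx
    rw [hTadj, ContinuousLinearMap.mul_apply] at hx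
    have hv : P.V (adjoint P.V x) = 0 := by
      have : adjoint P.V x ∈ LinearMap.ker (P.V : H →ₗ[ℂ] H) := by
        rw [P.kerV, ← hkerR, LinearMap.mem_ker]; exact hx
      exact LinearMap.mem_ker.mp this
    have hRx : P.R x = 0 := by
      calc P.R x = (P.R * (P.V * adjoint P.V)) x := by rw [h2]
        _ = P.R (P.V (adjoint P.V x)) := by
            simp [ContinuousLinearMap.mul_apply]
        _ = 0 := by rw [hv, map_zero]
    rw [← hkerR, LinearMap.mem_ker]
    exact hRx
  have hAC : (LinearMap.ker ((adjoint T : H →L[ℂ] H) : H →ₗ[ℂ] H) ≤ LinearMap.ker (T : H →ₗ[ℂ] H)) →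
      P.V * adjoint P.V * adjoint P.V = adjoint P.V := by
    intro hA
    ext x
    rw [ContinuousLinearMap.mul_apply]
    refine proj_fix' hP1sa hP1idem ?_
    rw [hker_eq]
    apply Submodule.orthogonal_le hA
    rw [← P.kerV, Submodule.mem_orthogonal]
    intro y hy
    rw [adjoint_inner_right, (by simpa only [ContinuousLinearMap.coe_coe] using LinearMap.mem_ker.mp hy : P.V y = 0), inner_zero_left]
  have hCB : (P.V * adjoint P.V * adjoint P.V = adjoint P.V) →
      P.V * adjoint P.V * P.R = P.R := by
    intro hC
    have hQR : (adjoint P.V * P.V) * P.R = P.R := by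
      ext x
      rw [ContinuousLinearMap.mul_apply]
      refine proj_fix' hQsa hQidem ?_
      rw [Submodule.mem_orthogonal]
      intro y hy
      have hy' : (adjoint P.V * P.V) y = 0 := LinearMap.mem_ker.mp hy
      have hVy : P.V y = 0 := by
        have : P.V ((adjoint P.V * P.V) y) = P.V y := by
          have := congrArg (fun f : H →L[ℂ] H => f y) P.partIso
          simpa [ContinuousLinearMap.mul_apply] using this
        rw [← this, hy', map_zero]
      have hRy : P.R y = 0 := by
        have : y ∈ LinearMap.ker (P.R : H →ₗ[ℂ] H) := by
          rw [hkerR, ← P.kerV, LinearMap.mem_ker]; exact hVy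
        exact LinearMap.mem_ker.mp this
      rw [← adjoint_inner_left, hR, hRy, inner_zero_left]
    have hQRp : ∀ x, adjoint P.V (P.V (P.R x)) = P.R x := by
      intro x
      have := congrArg (fun f : H →L[ℂ] H => f x) hQR
      simpa [ContinuousLinearMap.mul_apply] using this
    have hCp : ∀ z, P.V (adjoint P.V (adjoint P.V z)) = adjoint P.V z := by
      intro z
      have := congrArg (fun f : H →L[ℂ] H => f z) hC
      simpa [ContinuousLinearMap.mul_apply] using this
    ext x
    rw [ContinuousLinearMap.mul_apply, ContinuousLinearMap.mul_apply]
    calc P.V (adjoint P.V (P.R x))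
        = P.V (adjoint P.V (adjoint P.V (P.V (P.R x)))) := by rw [hQRp]
      _ = adjoint P.V (P.V (P.R x)) := hCp (P.V (P.R x))
      _ = P.R x := hQRp x
  exact ⟨⟨fun hA => ⟨hAB hA, hsecond (hAB hA)⟩, fun hB => hBA hB.2⟩,
    ⟨hAC, fun hC => hBA (hsecond (hCB hC))⟩⟩
end

section
/- Let T ∈ B(H) with N(T*) ⊆ N(T) and canonical polar decomposition T = V|T|. Then for every n ∈ ℕ, the n-th mean transform iterate satisfies T̂^{(n)} = (1/2ⁿ) V (∑_{j=0}^{n} C(n,j) (V*)^j |T| V^j). -/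
open ContinuousLinearMap Filter Topology

local notation "⟪" x ", " y "⟫" => @inner ℂ _ _ x y

set_option synthInstance.maxHeartbeats 400000
set_option maxHeartbeats 1600000

namespace PolarDecomp

variable {H : Type*} [NormedAddCommGroup H] [InnerProductSpace ℂ H] [CompleteSpace H]
variable {T : H →L[ℂ] H} (P : PolarDecomp T)

lemma isPositive_real_smul (c : ℝ) (hc : 0 ≤ c) {B : H →L[ℂ] H} (hB : B.IsPositive) :
    ((c : ℂ) • B).IsPositive := by
  constructor
  · refine isSelfAdjoint_iff_isSymmetric.mp ?_
    rw [isSelfAdjoint_iff, star_smul, RCLike.star_def, Complex.conj_ofReal, hB.isSelfAdjoint.star_eq]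
  · intro x
    have : ((c : ℂ) • B).reApplyInnerSelf x = c * B.reApplyInnerSelf x := by
      simp only [ContinuousLinearMap.reApplyInnerSelf, ContinuousLinearMap.smul_apply,
        inner_smul_left, Complex.conj_ofReal, RCLike.re_to_complex, Complex.re_ofReal_mul]
    rw [this]
    exact mul_nonneg hc (hB.2 x)

lemma pos_apply_zero (R : H →L[ℂ] H) (hR : R.IsPositive) (x : H)
    (h : RCLike.re ⟪R x, x⟫ = 0) : R x = 0 := by
  have h0 : (0 : H →L[ℂ] H) ≤ R := (ContinuousLinearMap.nonneg_iff_isPositive R).mpr hR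
  set q := CFC.sqrt R with hq
  have hq0 : (0 : H →L[ℂ] H) ≤ q := CFC.sqrt_nonneg (a := R)
  have hq2 : q * q = R := by
    have := CFC.sq_sqrt R h0
    rwa [sq] at this
  have hqsym := isSelfAdjoint_iff_isSymmetric.mp hq0.isSelfAdjoint
  have key : ⟪q x, q x⟫ = ⟪R x, x⟫ := by
    rw [← hq2, ContinuousLinearMap.mul_apply]; exact (hqsym (q x) x).symm
  have h2 : q x = 0 := by
    have hre : RCLike.re ⟪q x, q x⟫ = 0 := by rw [key]; exact h
    rw [inner_self_eq_norm_sq (𝕜 := ℂ)] at hre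
    simpa using hre
  have : R x = q (q x) := by rw [← ContinuousLinearMap.mul_apply, hq2]
  rw [this, h2, map_zero]

lemma aux_apply_zero (A : H →L[ℂ] H) (x : H) (h : adjoint A (A x) = 0) : A x = 0 := by
  have : ⟪A x, A x⟫ = 0 := by rw [← adjoint_inner_left, h, inner_zero_left]
  exact inner_self_eq_zero.mp this

lemma R_zero_iff (x : H) : P.R x = 0 ↔ T x = 0 := by
  have hRsa : adjoint P.R = P.R := isSelfAdjoint_iff'.mp P.posR.isSelfAdjoint
  have h1 : ⟪P.R x, P.R x⟫ = ⟪T x, T x⟫ := by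
    calc ⟪P.R x, P.R x⟫ = ⟪x, adjoint P.R (P.R x)⟫ := (adjoint_inner_right _ _ _).symm
    _ = ⟪x, (P.R * P.R) x⟫ := by rw [hRsa, ← ContinuousLinearMap.mul_apply]
    _ = ⟪x, adjoint T (T x)⟫ := by rw [P.sqR, ContinuousLinearMap.mul_apply]
    _ = ⟪T x, T x⟫ := adjoint_inner_right _ _ _
  constructor
  · intro h
    have := h1.symm
    rw [h, inner_zero_left] at h1
    exact inner_self_eq_zero.mp h1.symm
  · intro h
    rw [h, inner_zero_left] at h1
    exact inner_self_eq_zero.mp h1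

lemma V_zero_iff (x : H) : P.V x = 0 ↔ T x = 0 := by
  have := SetLike.ext_iff.mp P.kerV x
  simpa only [LinearMap.mem_ker, ContinuousLinearMap.coe_coe] using this

lemma V_zero_of_adjV_zero (hker : LinearMap.ker ((adjoint T : H →L[ℂ] H) : H →ₗ[ℂ] H) ≤ LinearMap.ker (T : H →ₗ[ℂ] H))
    (y : H) (h : adjoint P.V y = 0) : P.V y = 0 := by
  have hRsa : adjoint P.R = P.R := isSelfAdjoint_iff'.mp P.posR.isSelfAdjoint
  have hT : adjoint T = P.R * adjoint P.V := by
    have := congrArg adjoint P.factor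
    simp only [← star_eq_adjoint, star_mul] at this
    rw [star_eq_adjoint, star_eq_adjoint, star_eq_adjoint, hRsa] at this
    exact this
  have hTy : adjoint T y = 0 := by rw [hT, ContinuousLinearMap.mul_apply, h, map_zero]
  have : y ∈ LinearMap.ker (adjoint T : H →ₗ[ℂ] H) := by simpa [LinearMap.mem_ker] using hTy
  have hy := hker this
  rw [LinearMap.mem_ker] at hy
  exact (P.V_zero_iff y).mpr hy

lemma adj_partIso : adjoint P.V * P.V * adjoint P.V = adjoint P.V := by
  have := congrArg star P.partIso
  simpa [star_mul, star_eq_adjoint, adjoint_adjoint, mul_assoc] using this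


noncomputable def opA (j : ℕ) : H →L[ℂ] H := (adjoint P.V) ^ j * P.R * P.V ^ j

lemma V_zero_R (x : H) (h : P.V x = 0) : P.R x = 0 :=
  (P.R_zero_iff x).mpr ((P.V_zero_iff x).mp h)

lemma opA_apply_zero (j : ℕ) (x : H) (hV : P.V x = 0) : opA P j x = 0 := by
  cases j with
  | zero => simp [opA, ContinuousLinearMap.mul_apply, P.V_zero_R x hV]
  | succ j => simp [opA, pow_succ, ContinuousLinearMap.mul_apply, hV]

lemma opA_selfAdjoint (j : ℕ) : IsSelfAdjoint (opA P j) := by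
  have hR : IsSelfAdjoint P.R := P.posR.isSelfAdjoint
  have hstar : star (P.V ^ j) = (adjoint P.V) ^ j := by rw [star_pow, star_eq_adjoint]
  have hstar2 : star ((adjoint P.V) ^ j) = P.V ^ j := by
    rw [star_pow, ← star_eq_adjoint, star_star]
  unfold opA
  rw [isSelfAdjoint_iff, star_mul, star_mul, hstar, hstar2, hR.star_eq, mul_assoc]

lemma opA_adjoint (j : ℕ) : adjoint (opA P j) = opA P j :=
  isSelfAdjoint_iff'.mp (P.opA_selfAdjoint j)

lemma opA_isPositive (j : ℕ) : (opA P j).IsPositive := by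
  have h := P.posR.adjoint_conj (P.V ^ j)
  have hadj : adjoint (P.V ^ j) = (adjoint P.V) ^ j := by
    simp [← star_eq_adjoint, star_pow]
  rw [← ContinuousLinearMap.mul_def, ← ContinuousLinearMap.mul_def, hadj] at h
  exact h


lemma opA_comp_VVadj (hker : LinearMap.ker ((adjoint T : H →L[ℂ] H) : H →ₗ[ℂ] H) ≤ LinearMap.ker (T : H →ₗ[ℂ] H)) (j : ℕ) :
    opA P j * (P.V * adjoint P.V) = opA P j := by
  ext y
  rw [ContinuousLinearMap.mul_apply, ContinuousLinearMap.mul_apply]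
  have hz : adjoint P.V (P.V (adjoint P.V y) - y) = 0 := by
    have := congrArg (fun A : H →L[ℂ] H => A y) P.adj_partIso
    simp only [ContinuousLinearMap.mul_apply] at this
    rw [map_sub, sub_eq_zero]
    exact this
  have hV : P.V (P.V (adjoint P.V y) - y) = 0 := P.V_zero_of_adjV_zero hker _ hz
  have h0 := P.opA_apply_zero j _ hV
  rw [map_sub, sub_eq_zero] at h0
  exact h0

lemma opA_comp_adjVV (j : ℕ) : opA P j * (adjoint P.V * P.V) = opA P j := by
  ext y
  rw [ContinuousLinearMap.mul_apply, ContinuousLinearMap.mul_apply]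
  have hz : adjoint P.V (P.V (adjoint P.V (P.V y) - y)) = 0 := by
    have := congrArg (fun A : H →L[ℂ] H => A (P.V y)) P.adj_partIso
    simp only [ContinuousLinearMap.mul_apply] at this
    rw [map_sub, map_sub, sub_eq_zero]
    exact this
  have hV : P.V (adjoint P.V (P.V y) - y) = 0 := aux_apply_zero P.V _ hz
  have h0 := P.opA_apply_zero j _ hV
  rw [map_sub, sub_eq_zero] at h0
  exact h0

lemma VVadj_selfAdjoint : IsSelfAdjoint (P.V * adjoint P.V) := by
  rw [isSelfAdjoint_iff, star_mul, ← star_eq_adjoint, star_star, star_eq_adjoint]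

lemma adjVV_selfAdjoint : IsSelfAdjoint (adjoint P.V * P.V) := by
  rw [isSelfAdjoint_iff, star_mul, ← star_eq_adjoint, star_star, star_eq_adjoint]

lemma VVadj_comp_opA (hker : LinearMap.ker ((adjoint T : H →L[ℂ] H) : H →ₗ[ℂ] H) ≤ LinearMap.ker (T : H →ₗ[ℂ] H)) (j : ℕ) :
    (P.V * adjoint P.V) * opA P j = opA P j := by
  have h := congrArg star (P.opA_comp_VVadj hker j)
  rwa [star_mul, P.VVadj_selfAdjoint.star_eq, (P.opA_selfAdjoint j).star_eq] at h

lemma adjVV_comp_opA (j : ℕ) : (adjoint P.V * P.V) * opA P j = opA P j := by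
  have h := congrArg star (P.opA_comp_adjVV j)
  rwa [star_mul, P.adjVV_selfAdjoint.star_eq, (P.opA_selfAdjoint j).star_eq] at h

lemma opA_mul_V (hker : LinearMap.ker ((adjoint T : H →L[ℂ] H) : H →ₗ[ℂ] H) ≤ LinearMap.ker (T : H →ₗ[ℂ] H)) (j : ℕ) :
    opA P j * P.V = P.V * opA P (j + 1) := by
  have h1 : opA P (j + 1) = adjoint P.V * opA P j * P.V := by
    unfold opA
    rw [pow_succ (P.V) j, pow_succ' (adjoint P.V) j]
    simp only [mul_assoc]
  rw [h1, show P.V * (adjoint P.V * opA P j * P.V) = (P.V * adjoint P.V * opA P j) * P.V by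
    simp only [mul_assoc], P.VVadj_comp_opA hker j]


noncomputable def sumA (n : ℕ) : H →L[ℂ] H :=
  ∑ j ∈ Finset.range (n + 1), (n.choose j : ℂ) • opA P j

lemma sumA_selfAdjoint (n : ℕ) : IsSelfAdjoint (sumA P n) := by
  unfold sumA
  rw [isSelfAdjoint_iff, star_sum]
  exact Finset.sum_congr rfl fun j _ => by
    rw [star_smul, star_natCast, (P.opA_selfAdjoint j).star_eq]

lemma sumA_nonneg (n : ℕ) : (0 : H →L[ℂ] H) ≤ sumA P n := by
  refine Finset.sum_nonneg fun j _ => ?_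
  rw [show ((n.choose j : ℂ)) • opA P j = (n.choose j) • opA P j from
    Nat.cast_smul_eq_nsmul ℂ _ _]
  exact nsmul_nonneg ((nonneg_iff_isPositive _).mpr (P.opA_isPositive j)) _

lemma sumA_comp_adjVV (n : ℕ) : sumA P n * (adjoint P.V * P.V) = sumA P n := by
  unfold sumA
  rw [Finset.sum_mul]
  exact Finset.sum_congr rfl fun j _ => by rw [smul_mul_assoc, P.opA_comp_adjVV j]

lemma adjVV_comp_sumA (n : ℕ) : (adjoint P.V * P.V) * sumA P n = sumA P n := by
  have h := congrArg star (P.sumA_comp_adjVV n)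
  rwa [star_mul, P.adjVV_selfAdjoint.star_eq, (P.sumA_selfAdjoint n).star_eq] at h

lemma sumA_apply_zero (n : ℕ) (x : H) (hV : P.V x = 0) : sumA P n x = 0 := by
  unfold sumA
  rw [ContinuousLinearMap.sum_apply]
  refine Finset.sum_eq_zero fun j _ => ?_
  rw [ContinuousLinearMap.smul_apply, P.opA_apply_zero j x hV, smul_zero]

lemma sumA_mul_V (hker : LinearMap.ker ((adjoint T : H →L[ℂ] H) : H →ₗ[ℂ] H) ≤ LinearMap.ker (T : H →ₗ[ℂ] H)) (n : ℕ) :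
    sumA P n * P.V = P.V * ∑ j ∈ Finset.range (n + 1), (n.choose j : ℂ) • opA P (j + 1) := by
  unfold sumA
  rw [Finset.sum_mul, Finset.mul_sum]
  exact Finset.sum_congr rfl fun j _ => by
    rw [smul_mul_assoc, P.opA_mul_V hker j, mul_smul_comm]

lemma sumA_succ_eq (n : ℕ) : sumA P (n + 1) =
    sumA P n + ∑ j ∈ Finset.range (n + 1), (n.choose j : ℂ) • opA P (j + 1) := by
  unfold sumA
  rw [Finset.sum_range_succ' (fun j => ((n+1).choose j : ℂ) • opA P j) (n + 1)]
  have hsplit : ∀ j, (((n+1).choose (j+1) : ℕ) : ℂ) • opA P (j+1)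
      = (n.choose (j+1) : ℂ) • opA P (j+1) + (n.choose j : ℂ) • opA P (j+1) := by
    intro j
    rw [Nat.choose_succ_succ]
    push_cast
    rw [add_smul]
    abel
  rw [Finset.sum_congr rfl (fun j _ => hsplit j), Finset.sum_add_distrib]
  have h1 : ∑ j ∈ Finset.range (n + 1), (n.choose (j+1) : ℂ) • opA P (j+1)
      = ∑ j ∈ Finset.range n, (n.choose (j+1) : ℂ) • opA P (j+1) := by
    rw [Finset.sum_range_succ, Nat.choose_succ_self]
    simp
  have h2 : ∑ j ∈ Finset.range (n + 1), (n.choose j : ℂ) • opA P j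
      = (∑ j ∈ Finset.range n, (n.choose (j+1) : ℂ) • opA P (j+1))
        + ((n.choose 0 : ℂ)) • opA P 0 := by
    rw [Finset.sum_range_succ' (fun j => (n.choose j : ℂ) • opA P j) n]
  rw [h1, h2]
  simp only [Nat.choose_zero_right, Nat.cast_one]
  abel

lemma mean_identity (hker : LinearMap.ker ((adjoint T : H →L[ℂ] H) : H →ₗ[ℂ] H) ≤ LinearMap.ker (T : H →ₗ[ℂ] H)) (n : ℕ) :
    P.V * sumA P n + sumA P n * P.V = P.V * sumA P (n + 1) := by
  rw [P.sumA_mul_V hker n, P.sumA_succ_eq n, mul_add]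


lemma V_zero_of_sumA_zero (n : ℕ) (x : H) (h : sumA P n x = 0) : P.V x = 0 := by
  have hre : ∀ j, (0 : ℝ) ≤ RCLike.re ⟪opA P j x, x⟫ := fun j =>
    (RCLike.nonneg_iff.mp ((P.opA_isPositive j).inner_nonneg_left x)).1
  have hsum : ∑ j ∈ Finset.range (n + 1),
      (n.choose j : ℝ) * RCLike.re ⟪opA P j x, x⟫ = 0 := by
    have h1 : RCLike.re ⟪sumA P n x, x⟫ = 0 := by rw [h, inner_zero_left]; simp
    rw [← h1]
    unfold sumA
    rw [ContinuousLinearMap.sum_apply, sum_inner, map_sum]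
    refine Finset.sum_congr rfl fun j _ => ?_
    rw [ContinuousLinearMap.smul_apply, inner_smul_left]
    simp [RCLike.star_def]
  have hterm : ∀ j ∈ Finset.range (n + 1),
      (n.choose j : ℝ) * RCLike.re ⟪opA P j x, x⟫ = 0 := by
    refine (Finset.sum_eq_zero_iff_of_nonneg fun j _ => ?_).mp hsum
    exact mul_nonneg (by positivity) (hre j)
  have h0 := hterm 0 (Finset.mem_range.mpr (Nat.succ_pos n))
  simp only [Nat.choose_zero_right, Nat.cast_one, one_mul] at h0
  have hR : P.R x = 0 := by
    have hA : opA P 0 x = P.R x := by simp [opA]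
    rw [hA] at h0
    exact pos_apply_zero P.R P.posR x h0
  exact (P.V_zero_iff x).mpr ((P.R_zero_iff x).mp hR)


lemma star_inv_two_pow (n : ℕ) : star (((2 : ℂ) ^ n)⁻¹) = ((2 : ℂ) ^ n)⁻¹ := by
  simp

noncomputable def scaledPD (n : ℕ) :
    PolarDecomp (((2 : ℂ) ^ n)⁻¹ • (P.V * sumA P n)) where
  V := P.V
  R := ((2 : ℂ) ^ n)⁻¹ • sumA P n
  posR := by
    have hc : ((2 : ℂ) ^ n)⁻¹ = ((((2 : ℝ) ^ n)⁻¹ : ℝ) : ℂ) := by push_cast; ring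
    rw [hc]
    exact isPositive_real_smul _ (by positivity)
      ((nonneg_iff_isPositive _).mp (P.sumA_nonneg n))
  sqR := by
    have hadj : adjoint (((2 : ℂ) ^ n)⁻¹ • (P.V * sumA P n))
        = ((2 : ℂ) ^ n)⁻¹ • (sumA P n * adjoint P.V) := by
      rw [← star_eq_adjoint, star_smul, star_mul, (P.sumA_selfAdjoint n).star_eq,
        star_eq_adjoint, star_inv_two_pow]
    rw [hadj, smul_mul_smul_comm, smul_mul_smul_comm]
    congr 1
    rw [show sumA P n * adjoint P.V * (P.V * sumA P n)
        = sumA P n * ((adjoint P.V * P.V) * sumA P n) by simp only [mul_assoc],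
      P.adjVV_comp_sumA n]
  partIso := P.partIso
  kerV := by
    ext x
    simp only [LinearMap.mem_ker, ContinuousLinearMap.coe_coe,
      ContinuousLinearMap.smul_apply, ContinuousLinearMap.mul_apply]
    constructor
    · intro hx
      rw [P.sumA_apply_zero n x hx, map_zero, smul_zero]
    · intro hx
      have h2 : P.V (sumA P n x) = 0 := by
        have hc : ((2 : ℂ) ^ n)⁻¹ ≠ 0 := by norm_num
        exact (smul_eq_zero.mp hx).resolve_left hc
      have hs : sumA P n x = 0 := by
        have := congrArg (fun A : H →L[ℂ] H => A x) (P.adjVV_comp_sumA n)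
        simp only [ContinuousLinearMap.mul_apply] at this
        rw [← this, h2, map_zero]
      exact P.V_zero_of_sumA_zero n x hs
  factor := by rw [mul_smul_comm]

theorem polar_R_unique {A : H →L[ℂ] H} (P₁ P₂ : PolarDecomp A) : P₁.R = P₂.R := by
  have h1 : (0 : H →L[ℂ] H) ≤ P₁.R := (nonneg_iff_isPositive _).mpr P₁.posR
  have h2 : (0 : H →L[ℂ] H) ≤ P₂.R := (nonneg_iff_isPositive _).mpr P₂.posR
  have hsq : P₁.R ^ 2 = P₂.R ^ 2 := by rw [sq, sq, P₁.sqR, P₂.sqR]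
  calc P₁.R = CFC.sqrt (P₁.R ^ 2) := (CFC.sqrt_sq _ h1).symm
  _ = CFC.sqrt (P₂.R ^ 2) := by rw [hsq]
  _ = P₂.R := CFC.sqrt_sq _ h2

theorem polar_V_unique {A : H →L[ℂ] H} (P₁ P₂ : PolarDecomp A) : P₁.V = P₂.V := by
  have hR := polar_R_unique P₁ P₂
  have hRsa : adjoint P₁.R = P₁.R := isSelfAdjoint_iff'.mp P₁.posR.isSelfAdjoint
  set D := P₁.V - P₂.V with hD
  have hranR : ∀ x, D (P₁.R x) = 0 := fun x => by
    have h1 : P₁.V (P₁.R x) = A x := by rw [← ContinuousLinearMap.mul_apply, ← P₁.factor]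
    have h2 : P₂.V (P₁.R x) = A x := by rw [hR, ← ContinuousLinearMap.mul_apply, ← P₂.factor]
    simp only [hD, ContinuousLinearMap.sub_apply, h1, h2, sub_self]
  have hkerD : ∀ x, P₁.R x = 0 → D x = 0 := fun x hx => by
    have hA : A x = 0 := (P₁.R_zero_iff x).mp hx
    have v1 : P₁.V x = 0 := (P₁.V_zero_iff x).mpr hA
    have v2 : P₂.V x = 0 := (P₂.V_zero_iff x).mpr hA
    simp only [hD, ContinuousLinearMap.sub_apply, v1, v2, sub_self]
  set K : Submodule ℂ H := LinearMap.ker (P₁.R : H →ₗ[ℂ] H) with hK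
  haveI : K.HasOrthogonalProjection := by
    have hcl : IsClosed (K : Set H) := isClosed_ker (P₁.R)
    haveI : CompleteSpace K := hcl.completeSpace_coe
    infer_instance
  have horth : Kᗮ ≤ LinearMap.ker (D : H →ₗ[ℂ] H) := by
    have hsub : (LinearMap.range (P₁.R : H →ₗ[ℂ] H))ᗮ ≤ K := by
      intro y hy
      rw [hK, LinearMap.mem_ker]
      have hmem : P₁.R (P₁.R y) ∈ LinearMap.range (P₁.R : H →ₗ[ℂ] H) := ⟨P₁.R y, rfl⟩
      have h0 : ⟪P₁.R (P₁.R y), y⟫ = 0 := hy _ hmem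
      have : ⟪P₁.R y, P₁.R y⟫ = 0 := by
        calc ⟪P₁.R y, P₁.R y⟫ = ⟪y, adjoint P₁.R (P₁.R y)⟫ := (adjoint_inner_right _ _ _).symm
        _ = ⟪y, P₁.R (P₁.R y)⟫ := by rw [hRsa]
        _ = 0 := by rw [← inner_conj_symm, h0, map_zero]
      exact inner_self_eq_zero.mp this
    have h2 : Kᗮ ≤ (LinearMap.range (P₁.R : H →ₗ[ℂ] H))ᗮᗮ := Submodule.orthogonal_le hsub
    rw [Submodule.orthogonal_orthogonal_eq_closure] at h2
    refine le_trans h2 (Submodule.topologicalClosure_minimal _ ?_ (isClosed_ker D))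
    intro y hy
    obtain ⟨x, rfl⟩ := hy
    rw [LinearMap.mem_ker]
    exact hranR x
  have hall : ∀ x, D x = 0 := by
    intro x
    have hx : x ∈ K ⊔ Kᗮ := by rw [Submodule.sup_orthogonal_of_hasOrthogonalProjection]; trivial
    obtain ⟨y, hy, z, hz, rfl⟩ := Submodule.mem_sup.mp hx
    rw [map_add, hkerD y (by rwa [hK, LinearMap.mem_ker] at hy), (show D z = 0 from horth hz), add_zero]
  have : D = 0 := by ext x; exact hall x
  have := sub_eq_zero.mp (hD ▸ this)
  exact this

end PolarDecomp


theorem mean_iterates_formula {H : Type*} [NormedAddCommGroup H] [InnerProductSpace ℂ H]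
    [CompleteSpace H] (T : H →L[ℂ] H) (P : PolarDecomp T)
    (hker : LinearMap.ker ((adjoint T : H →L[ℂ] H) : H →ₗ[ℂ] H) ≤ LinearMap.ker (T : H →ₗ[ℂ] H)) (n : ℕ) :
    meanTransform^[n] T = ((2 : ℂ) ^ n)⁻¹ •
      (P.V * ∑ j ∈ Finset.range (n + 1),
        (n.choose j : ℂ) • ((adjoint P.V) ^ j * P.R * P.V ^ j)) := by
  have hsum : ∀ m : ℕ, PolarDecomp.sumA P m = ∑ j ∈ Finset.range (m + 1),
      (m.choose j : ℂ) • ((adjoint P.V) ^ j * P.R * P.V ^ j) := fun m => rfl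
  induction n with
  | zero =>
    simp only [Function.iterate_zero, id_eq, pow_zero, inv_one, one_smul]
    rw [← hsum 0]
    have h0 : PolarDecomp.sumA P 0 = P.R := by
      simp [PolarDecomp.sumA, PolarDecomp.opA, Finset.sum_range_one]
    rw [h0, ← P.factor]
  | succ n ih =>
    rw [Function.iterate_succ_apply', ih, ← hsum n, ← hsum (n + 1)]
    have hne : Nonempty (PolarDecomp (((2 : ℂ) ^ n)⁻¹ • (P.V * PolarDecomp.sumA P n))) :=
      ⟨P.scaledPD n⟩
    unfold meanTransform
    rw [dif_pos hne]
    have hV : hne.some.V = P.V := PolarDecomp.polar_V_unique hne.some (P.scaledPD n)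
    have hR : hne.some.R = ((2 : ℂ) ^ n)⁻¹ • PolarDecomp.sumA P n :=
      PolarDecomp.polar_R_unique hne.some (P.scaledPD n)
    unfold PolarDecomp.mean
    rw [hV, hR, mul_smul_comm, smul_mul_assoc, ← smul_add, smul_smul,
      P.mean_identity hker n]
    congr 1
    rw [pow_succ]
    ring
end

section
/- Let T ∈ B(H) with N(T*) ⊆ N(T). If T is semi-hyponormal (i.e., (T*T)^{1/2} ≥ (TT*)^{1/2}), then its mean transform T̂ is also semi-hyponormal. -/
open ContinuousLinearMap Filter Topology

section Aux

variable {H : Type*} [NormedAddCommGroup H] [InnerProductSpace ℂ H] [CompleteSpace H]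

lemma isPositive_half_smul {f : H →L[ℂ] H} (hf : f.IsPositive) :
    ((2⁻¹ : ℂ) • f).IsPositive := by
  constructor
  · have h := hf.isSelfAdjoint
    have h2 : IsSelfAdjoint ((2⁻¹ : ℂ) • f) := by
      rw [isSelfAdjoint_iff] at h ⊢
      rw [star_smul, h]
      congr 1
      norm_num
    exact (isSelfAdjoint_iff_isSymmetric).1 h2
  · intro x
    have h0 := hf.2 x
    rw [reApplyInnerSelf] at h0 ⊢
    rw [smul_apply, inner_smul_left]
    have h1 : (starRingEnd ℂ) (2⁻¹ : ℂ) = (2⁻¹ : ℂ) := by rw [map_inv₀, map_ofNat]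
    rw [h1]
    simp only [RCLike.re_to_complex] at h0 ⊢
    rw [Complex.mul_re]
    norm_num
    linarith

end Aux

set_option maxHeartbeats 1000000 in
set_option synthInstance.maxHeartbeats 1000000 in
theorem mean_transform_semihyponormal {H : Type*} [NormedAddCommGroup H]
    [InnerProductSpace ℂ H] [CompleteSpace H] (T : H →L[ℂ] H) (P : PolarDecomp T)
    (hker : LinearMap.ker (adjoint T : H →ₗ[ℂ] H) ≤ LinearMap.ker (T : H →ₗ[ℂ] H))
    (hsh : (P.R - P.V * P.R * adjoint P.V).IsPositive)
    (Q : PolarDecomp P.mean) :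
    (Q.R - Q.V * Q.R * adjoint Q.V).IsPositive := by
  set V := P.V with hVdef
  set A := P.R with hAdef
  have hfac : T = V * A := P.factor
  have hsqA : A * A = adjoint T * T := P.sqR
  have hpi : V * adjoint V * V = V := P.partIso
  rw [← star_eq_adjoint] at hpi
  have hkerVT : LinearMap.ker (V : H →ₗ[ℂ] H) = LinearMap.ker (T : H →ₗ[ℂ] H) := P.kerV
  have hAsa : IsSelfAdjoint A := P.posR.isSelfAdjoint
  have hAadj : adjoint A = A := hAsa.adjoint_eq
  have hAst : star A = A := hAsa
  -- ⟪A x, A x⟫ = ⟪T x, T x⟫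
  have hnorm : ∀ x : H, (inner ℂ (A x) (A x) : ℂ) = inner ℂ (T x) (T x) := by
    intro x
    calc (inner ℂ (A x) (A x) : ℂ)
        = inner ℂ ((adjoint A) (A x)) x := (adjoint_inner_left A x (A x)).symm
      _ = inner ℂ (A (A x)) x := by rw [hAadj]
      _ = inner ℂ ((A * A) x) x := rfl
      _ = inner ℂ ((adjoint T * T) x) x := by rw [hsqA]
      _ = inner ℂ ((adjoint T) (T x)) x := rfl
      _ = inner ℂ (T x) (T x) := adjoint_inner_left T x (T x)
  have hTA : ∀ x : H, T x = 0 → A x = 0 := by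
    intro x hx
    rw [← inner_self_eq_zero (𝕜 := ℂ), hnorm x, hx, inner_zero_left]
  -- kernel facts
  have f_a : ∀ x : H, V x = 0 → A x = 0 := by
    intro x hx
    have : x ∈ LinearMap.ker (T : H →ₗ[ℂ] H) := hkerVT ▸ (LinearMap.mem_ker.mpr hx)
    exact hTA x (LinearMap.mem_ker.mp this)
  have hTstar : adjoint T = A * star V := by
    rw [← star_eq_adjoint, hfac, star_mul, hAst]
  have f_b : ∀ x : H, star V x = 0 → A x = 0 := by
    intro x hx
    have h1 : adjoint T x = 0 := by rw [hTstar, ContinuousLinearMap.mul_apply, hx, map_zero]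
    have h2 : x ∈ LinearMap.ker (T : H →ₗ[ℂ] H) := hker (LinearMap.mem_ker.mpr h1)
    exact hTA x (LinearMap.mem_ker.mp h2)
  -- partial isometry identities
  have f5 : ∀ x : H, V (star V (V x)) = V x := fun x =>
    DFunLike.congr_fun hpi x
  have hpi' : star V * V * star V = star V := by
    have := congrArg star hpi
    simpa only [star_mul, star_star, mul_assoc] using this
  have f6 : ∀ x : H, star V (V (star V x)) = star V x := fun x =>
    DFunLike.congr_fun hpi' x
  -- A (star V (V x)) = A x
  have f2 : ∀ x : H, A (star V (V x)) = A x := by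
    intro x
    have hv : V (x - star V (V x)) = 0 := by
      rw [map_sub, f5, sub_self]
    have := f_a _ hv
    rw [map_sub, sub_eq_zero] at this
    exact this.symm
  have hAP : A * (star V * V) = A := by ext x; exact f2 x
  have hPA : (star V * V) * A = A := by
    have := congrArg star hAP
    simpa only [star_mul, star_star, hAst] using this
  have f1 : ∀ x : H, star V (V (A x)) = A x := by
    intro x
    have := DFunLike.congr_fun hPA x
    simpa [ContinuousLinearMap.mul_apply] using this
  -- A (V (star V x)) = A x
  have f4 : ∀ x : H, A (V (star V x)) = A x := by
    intro x
    have hv : star V (x - V (star V x)) = 0 := by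
      rw [map_sub, f6, sub_self]
    have := f_b _ hv
    rw [map_sub, sub_eq_zero] at this
    exact this.symm
  have hAQ : A * (V * star V) = A := by ext x; exact f4 x
  have hQA : (V * star V) * A = A := by
    have := congrArg star hAQ
    simpa only [star_mul, star_star, hAst] using this
  have f3 : ∀ x : H, V (star V (A x)) = A x := by
    intro x
    have := DFunLike.congr_fun hQA x
    simpa [ContinuousLinearMap.mul_apply] using this
  -- the candidate square root of (mean)* mean
  set B : H →L[ℂ] H := (2⁻¹ : ℂ) • (A + star V * A * V) with hBdef
  have hBapp : ∀ x : H, B x = (2⁻¹ : ℂ) • (A x + star V (A (V x))) := by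
    intro x; rw [hBdef]; rfl
  have hBpos : B.IsPositive := by
    apply isPositive_half_smul
    apply P.posR.add
    have h := P.posR.adjoint_conj V
    have he : star V * A * V = adjoint V ∘L A ∘L V := by
      rw [← star_eq_adjoint, mul_assoc]; rfl
    rw [he]; exact h
  have hBst : star B = B := hBpos.isSelfAdjoint
  have hmean : P.mean = (2⁻¹ : ℂ) • (V * A + A * V) := rfl
  have hVB : V * B = P.mean := by
    rw [hmean]; ext x
    simp only [ContinuousLinearMap.mul_apply, hBapp, map_smul, map_add, smul_apply, add_apply, f3]
  have hadjmean : adjoint P.mean = B * star V := by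
    rw [← star_eq_adjoint, ← hVB, star_mul, hBst]
  have hWVB : ∀ x : H, star V (V (B x)) = B x := by
    intro x
    rw [hBapp]
    simp only [map_smul, map_add, f1, f6]
  have hsql : B * B = adjoint P.mean * P.mean := by
    rw [hadjmean, ← hVB]
    ext x
    simp only [ContinuousLinearMap.mul_apply]
    rw [hWVB]
  -- Q.R = B by uniqueness of positive square roots
  have hQRB : Q.R = B := by
    have e1 : CFC.sqrt (adjoint P.mean * P.mean) = B :=
      CFC.sqrt_unique hsql ((nonneg_iff_isPositive B).2 hBpos)
    have e2 : CFC.sqrt (adjoint P.mean * P.mean) = Q.R :=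
      CFC.sqrt_unique Q.sqR ((nonneg_iff_isPositive Q.R).2 Q.posR)
    rw [← e2, e1]
  have hQVB : Q.V * B = V * B := by
    have h := Q.factor
    rw [hQRB] at h
    rw [← h, ← hVB]
  have hBQV : B * star Q.V = B * star V := by
    have := congrArg star hQVB
    simpa only [star_mul, hBst] using this
  have hconj : Q.V * Q.R * adjoint Q.V = V * B * star V := by
    rw [hQRB, ← star_eq_adjoint, mul_assoc, hBQV, ← mul_assoc, hQVB]
  rw [hconj, hQRB]
  -- B - V B V* = 2⁻¹ ((V* A V - A) + (A - V A V*))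
  have key : B - V * B * star V
      = (2⁻¹ : ℂ) • ((star V * A * V - A) + (A - V * A * star V)) := by
    ext x
    simp only [sub_apply, add_apply, smul_apply, ContinuousLinearMap.mul_apply, hBapp, map_smul, map_add,
      f3, f4]
    module
  rw [key]
  apply isPositive_half_smul
  apply IsPositive.add
  · have h := hsh.adjoint_conj V
    have he : star V * A * V - A = adjoint V ∘L (A - V * A * adjoint V) ∘L V := by
      ext x
      simp only [coe_comp', Function.comp_apply, sub_apply, ContinuousLinearMap.mul_apply, map_sub,
        ← star_eq_adjoint, f1, f2]
    rw [he]; exact h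
  · rw [star_eq_adjoint]; exact hsh
end

section
/- For any bounded operator T on a Hilbert space, the closure of the numerical range of the mean transform T̂ is contained in the closure of the numerical range of T; in particular the numerical radius satisfies w(T̂) ≤ w(T). -/
open ContinuousLinearMap Filter Topology

def numRange {H : Type*} [NormedAddCommGroup H] [InnerProductSpace ℂ H]
    (T : H →L[ℂ] H) : Set ℂ :=
  {z : ℂ | ∃ x : H, ‖x‖ = 1 ∧ (inner ℂ x (T x) : ℂ) = z}

section Aux

open Set
open scoped InnerProductSpace

variable {H : Type*} [NormedAddCommGroup H] [InnerProductSpace ℂ H]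

lemma inner_sub_smul_one (T : H →L[ℂ] H) (l : ℂ) {x : H} (hx : ‖x‖ = 1) :
    (⟪x, (T - l • 1) x⟫_ℂ) = ⟪x, T x⟫_ℂ - l := by
  simp [inner_sub_right, inner_smul_right, inner_self_eq_norm_sq_to_K, hx]

lemma numRange_disk (T : H →L[ℂ] H) {z : ℂ} (hz : z ∈ numRange T) (l : ℂ) :
    ‖z - l‖ ≤ ‖T - l • 1‖ := by
  obtain ⟨x, hx, rfl⟩ := hz
  rw [← inner_sub_smul_one T l hx]
  calc ‖⟪x, (T - l • 1) x⟫_ℂ‖ ≤ ‖x‖ * ‖(T - l • 1) x‖ := norm_inner_le_norm _ _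
    _ ≤ ‖x‖ * (‖T - l • 1‖ * ‖x‖) := by
        gcongr; exact le_opNorm _ _
    _ = ‖T - l • 1‖ := by rw [hx]; ring

lemma abs_numRange_le (T : H →L[ℂ] H) {z : ℂ} (hz : z ∈ numRange T) :
    ‖z‖ ≤ ‖T‖ := by
  have := numRange_disk T hz 0
  simpa using this

lemma exists_phase (u v : ℂ) : ∃ θ : ℝ,
    (Complex.exp (θ * Complex.I) * u + Complex.exp (-(θ * Complex.I)) * v).im = 0 := by
  set f : ℝ → ℝ := fun θ => (Complex.exp (θ * Complex.I) * u + Complex.exp (-(θ * Complex.I)) * v).im with hf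
  have hcont : Continuous f := by
    apply Complex.continuous_im.comp
    fun_prop
  have hpi : f Real.pi = - f 0 := by
    simp [hf, Complex.exp_neg, Complex.exp_pi_mul_I]
    ring
  rcases le_total (f 0) 0 with h0 | h0
  · have : (0:ℝ) ∈ Icc (f 0) (f Real.pi) := ⟨h0, by rw [hpi]; linarith⟩
    obtain ⟨θ, _, hθ⟩ := intermediate_value_Icc Real.pi_pos.le hcont.continuousOn this
    exact ⟨θ, hθ⟩
  · have : (0:ℝ) ∈ Icc (f Real.pi) (f 0) := ⟨by rw [hpi]; linarith, h0⟩
    obtain ⟨θ, _, hθ⟩ := intermediate_value_Icc' Real.pi_pos.le hcont.continuousOn this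
    exact ⟨θ, hθ⟩

lemma core_convex (S : H →L[ℂ] H) {x y : H} (hx : ‖x‖ = 1) (hy : ‖y‖ = 1)
    (hxS : ⟪x, S x⟫_ℂ = 0) (hyS : ⟪y, S y⟫_ℂ = 1) {t : ℝ} (ht : t ∈ Icc (0:ℝ) 1) :
    ∃ z : H, ‖z‖ = 1 ∧ ⟪z, S z⟫_ℂ = (t : ℂ) := by
  obtain ⟨θ, hθ⟩ := exists_phase (⟪x, S y⟫_ℂ) (⟪y, S x⟫_ℂ)
  set e : ℂ := Complex.exp (θ * Complex.I) with he
  have hee : starRingEnd ℂ e = Complex.exp (-(θ * Complex.I)) := by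
    rw [he, ← Complex.exp_conj]
    congr 1
    simp [Complex.conj_I]
  have hnorme : ‖e‖ = 1 := by
    simp [he, Complex.norm_exp_ofReal_mul_I]
  -- first candidate y₁
  set y₁ : H := e • y with hy₁
  have h1 : ‖y₁‖ = 1 := by rw [hy₁, norm_smul, hnorme, hy, mul_one]
  have h2 : ⟪y₁, S y₁⟫_ℂ = 1 := by
    have hc : (starRingEnd ℂ) e * e = 1 := by
      rw [← Complex.normSq_eq_conj_mul_self, ← Complex.sq_norm, hnorme]
      norm_num
    rw [hy₁, map_smul, inner_smul_left, inner_smul_right, hyS]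
    simp only [mul_one]
    exact hc
  have h3 : (⟪x, S y₁⟫_ℂ + ⟪y₁, S x⟫_ℂ).im = 0 := by
    rw [hy₁, map_smul, inner_smul_right, inner_smul_left, hee]
    exact hθ
  -- fix sign
  obtain ⟨w, hw1, hw2, hw3, hw4⟩ : ∃ w : H, ‖w‖ = 1 ∧ ⟪w, S w⟫_ℂ = 1 ∧
      (⟪x, S w⟫_ℂ + ⟪w, S x⟫_ℂ).im = 0 ∧ 0 ≤ (⟪x, w⟫_ℂ).re := by
    rcases le_total 0 (⟪x, y₁⟫_ℂ).re with hple | hple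
    · exact ⟨y₁, h1, h2, h3, hple⟩
    · refine ⟨-y₁, by simpa using h1, by simpa using h2, ?_, by simp; linarith⟩
      have hre : ⟪x, S (-y₁)⟫_ℂ + ⟪-y₁, S x⟫_ℂ = -(⟪x, S y₁⟫_ℂ + ⟪y₁, S x⟫_ℂ) := by
        rw [map_neg, inner_neg_right, inner_neg_left]
        ring
      rw [hre]
      simp only [Complex.neg_im, Complex.add_im] at h3 ⊢
      linarith
  -- abbreviations
  set c : ℝ := (⟪x, S w⟫_ℂ + ⟪w, S x⟫_ℂ).re with hc
  have hγ : ⟪x, S w⟫_ℂ + ⟪w, S x⟫_ℂ = (c : ℂ) := by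
    apply Complex.ext
    · simp [hc]
    · simp [hw3]
  set d : ℝ := (⟪x, w⟫_ℂ).re with hd
  set z : ℝ → H := fun s => ((1 - s : ℝ) : ℂ) • x + ((s : ℝ) : ℂ) • w with hz
  have hF : ∀ s : ℝ, ⟪z s, S (z s)⟫_ℂ = (s:ℂ)^2 + (s:ℂ)*(1 - (s:ℂ))*(c:ℂ) := by
    intro s
    have hws : ⟪w, S x⟫_ℂ = (c:ℂ) - ⟪x, S w⟫_ℂ := by rw [← hγ]; ring
    simp only [hz, map_add, map_smul, inner_add_left, inner_add_right,
      inner_smul_left, inner_smul_right, Complex.conj_ofReal, hxS, hw2, hws]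
    push_cast
    ring
  have hN : ∀ s : ℝ, ‖z s‖^2 = (1-s)^2 + s^2 + 2*(s*(1-s))*d := by
    intro s
    have := @norm_add_sq ℂ H _ _ _ (((1 - s : ℝ) : ℂ) • x) (((s : ℝ) : ℂ) • w)
    simp only [hz, this, norm_smul, inner_smul_left, inner_smul_right,
      Complex.conj_ofReal, Complex.norm_real, RCLike.re_to_complex]
    rw [hx, hw1]
    simp only [mul_one, mul_pow, ← Complex.ofReal_mul, Complex.re_ofReal_mul]
    rw [← hd, Real.norm_eq_abs, Real.norm_eq_abs, sq_abs, sq_abs]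
    ring
  have hNpos : ∀ s ∈ Icc (0:ℝ) 1, 0 < (1-s)^2 + s^2 + 2*(s*(1-s))*d := by
    intro s hs
    obtain ⟨h0, h1⟩ := hs
    nlinarith [mul_nonneg (mul_nonneg h0 (by linarith : (0:ℝ) ≤ 1 - s)) hw4]
  set f : ℝ → ℝ := fun s => (s^2 + s*(1-s)*c) / ((1-s)^2 + s^2 + 2*(s*(1-s))*d) with hfdef
  have hf0 : f 0 = 0 := by norm_num [hfdef]
  have hf1 : f 1 = 1 := by norm_num [hfdef]
  have hcont : ContinuousOn f (Icc (0:ℝ) 1) := by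
    apply ContinuousOn.div
    · fun_prop
    · fun_prop
    · exact fun s hs => (hNpos s hs).ne'
  obtain ⟨s, hs, hfs⟩ := intermediate_value_Icc zero_le_one hcont
    (by rw [hf0, hf1]; exact ht)
  set r : ℝ := ‖z s‖ with hr
  have hr2 : r^2 = (1-s)^2 + s^2 + 2*(s*(1-s))*d := hN s
  have hrpos : 0 < r := by
    have := hNpos s hs
    rw [← hr2] at this
    nlinarith [norm_nonneg (z s)]
  have hnum : s^2 + s*(1-s)*c = t * r^2 := by
    rw [hr2]
    exact (div_eq_iff (hNpos s hs).ne').mp hfs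
  refine ⟨((r⁻¹ : ℝ) : ℂ) • z s, ?_, ?_⟩
  · rw [norm_smul, Complex.norm_real, Real.norm_eq_abs, abs_inv, abs_of_pos hrpos, ← hr]
    field_simp
  · rw [map_smul, inner_smul_left, inner_smul_right, Complex.conj_ofReal, hF s]
    have : ((r⁻¹:ℝ):ℂ) * (((r⁻¹:ℝ):ℂ) * ((s:ℂ)^2 + (s:ℂ)*(1 - (s:ℂ))*(c:ℂ)))
        = ((r⁻¹^2 * (s^2 + s*(1-s)*c) : ℝ) : ℂ) := by
      push_cast
      ring
    rw [this, hnum]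
    rw [show r⁻¹^2 * (t * r^2) = t by field_simp]

lemma numRange_convex (T : H →L[ℂ] H) : Convex ℝ (numRange T) := by
  rintro α ⟨x, hx, rfl⟩ β ⟨y, hy, rfl⟩ a b ha hb hab
  set α := (⟪x, T x⟫_ℂ) with hα
  set β := (⟪y, T y⟫_ℂ) with hβ
  by_cases hab' : α = β
  · refine ⟨x, hx, ?_⟩
    rw [← hα, hab']
    rw [show a • β + b • β = ((a+b : ℝ) : ℂ) * β by push_cast [Complex.real_smul]; ring, hab]
    simp
  · set S : H →L[ℂ] H := (β - α)⁻¹ • (T - α • 1) with hS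
    have hδ : β - α ≠ 0 := sub_ne_zero.mpr (Ne.symm hab')
    have hSx : ⟪x, S x⟫_ℂ = 0 := by
      rw [hS]
      simp only [coe_smul', Pi.smul_apply, inner_smul_right, sub_apply, smul_apply, one_apply_eq_self,
        inner_sub_right, inner_self_eq_norm_sq_to_K, hx]
      simp [← hα]
    have hSy : ⟪y, S y⟫_ℂ = 1 := by
      rw [hS]
      simp only [coe_smul', Pi.smul_apply, inner_smul_right, sub_apply, smul_apply, one_apply_eq_self,
        inner_sub_right, inner_self_eq_norm_sq_to_K, hy]
      simp only [← hβ]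
      field_simp
      simp
    obtain ⟨z, hz1, hz2⟩ := core_convex S hx hy hSx hSy (t := b) ⟨hb, by linarith⟩
    refine ⟨z, hz1, ?_⟩
    have hTz : ⟪z, T z⟫_ℂ = α + (b : ℂ) * (β - α) := by
      have hzS : ⟪z, S z⟫_ℂ = (β - α)⁻¹ * (⟪z, T z⟫_ℂ - α) := by
        rw [hS]
        simp only [coe_smul', Pi.smul_apply, inner_smul_right, sub_apply, smul_apply, one_apply_eq_self,
          inner_sub_right, inner_self_eq_norm_sq_to_K, hz1]
        push_cast
        ring
      rw [hz2] at hzS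
      field_simp at hzS
      linear_combination -hzS
    rw [hTz]
    have hba : (a : ℂ) = 1 - (b : ℂ) := by
      have : (a : ℝ) = 1 - b := by linarith
      push_cast [this]
      ring
    rw [Complex.real_smul, Complex.real_smul, hba]
    ring

set_option maxHeartbeats 1000000 in
lemma mem_closure_of_disks (T : H →L[ℂ] H) {z : ℂ}
    (h : ∀ l : ℂ, ‖z - l‖ ≤ ‖T - l • 1‖) :
    z ∈ closure (numRange T) := by
  -- H is nontrivial
  have hT1 : (1:ℝ) ≤ ‖T - (z - 1) • 1‖ := by
    have := h (z - 1)
    simpa using this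
  have hne : ∃ x₁ : H, ‖x₁‖ = 1 := by
    by_contra hn
    push_neg at hn
    have hsub : ∀ x : H, x = 0 := by
      intro x
      by_contra hx0
      have hnx : ‖x‖ ≠ 0 := fun hc => hx0 (norm_eq_zero.mp hc)
      exact hn ((‖x‖⁻¹ : ℂ) • x) (by
        rw [norm_smul]
        simp [norm_inv, inv_mul_cancel₀ hnx])
    have hz0 : T - (z - 1) • 1 = 0 := by
      ext v
      rw [hsub ((T - (z-1) • 1) v)]
      rfl
    rw [hz0] at hT1
    simp at hT1
    linarith
  obtain ⟨x₁, hx₁⟩ := hne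
  have hWmem : (⟪x₁, T x₁⟫_ℂ) ∈ closure (numRange T) := subset_closure ⟨x₁, hx₁, rfl⟩
  by_contra hzK
  obtain ⟨f, u, hfu, huz⟩ := geometric_hahn_banach_closed_point
    ((numRange_convex T).closure) isClosed_closure hzK
  set φ : ℂ := (f 1 : ℝ) + (f Complex.I : ℝ) * Complex.I with hφ
  have hfval : ∀ w : ℂ, f w = ((starRingEnd ℂ) φ * w).re := by
    intro w
    conv_lhs => rw [show w = w.re • (1:ℂ) + w.im • Complex.I by
      rw [Complex.real_smul, Complex.real_smul, mul_one]
      exact (Complex.re_add_im w).symm]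
    rw [map_add, map_smul, map_smul]
    simp only [hφ, map_add, map_mul, Complex.conj_ofReal, Complex.conj_I, smul_eq_mul]
    simp [Complex.add_re, Complex.mul_re]
    ring
  have hφ0 : φ ≠ 0 := by
    intro hc
    have h1 := hfu _ hWmem
    have h2 := huz
    rw [hfval, hc] at h1 h2
    simp at h1 h2
    linarith
  set m : ℝ := ‖φ‖ with hm
  have hmpos : 0 < m := by
    rw [hm]
    exact norm_pos_iff.mpr hφ0
  set ψ : ℂ := ((m⁻¹ : ℝ) : ℂ) * φ with hψ
  have hψabs : ‖ψ‖ = 1 := by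
    rw [hψ, norm_mul, Complex.norm_real, Real.norm_eq_abs, ← hm]
    rw [abs_inv, abs_of_pos hmpos, inv_mul_cancel₀ hmpos.ne']
  set g : ℂ → ℝ := fun w => ((starRingEnd ℂ) ψ * w).re with hg
  have hgval : ∀ w : ℂ, g w = m⁻¹ * f w := by
    intro w
    rw [hg, hfval w, hψ]
    simp only [map_mul, Complex.conj_ofReal]
    rw [mul_assoc, Complex.re_ofReal_mul]
  set c : ℝ := m⁻¹ * u with hcdef
  have hKle : ∀ w ∈ closure (numRange T), g w ≤ c := by
    intro w hw
    rw [hgval, hcdef]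
    have := (hfu w hw).le
    gcongr
  have hgz : c < g z := by
    rw [hgval, hcdef]
    gcongr
  set δ : ℝ := g z - c with hδ
  have hδpos : 0 < δ := by rw [hδ]; linarith
  set t : ℝ := max (|g z| + 1) ((‖T‖^2 + 1) / (2*δ)) with htdef
  have ht1 : |g z| + 1 ≤ t := le_max_left _ _
  have ht2 : (‖T‖^2 + 1) / (2*δ) ≤ t := le_max_right _ _
  have htpos : 0 < t := lt_of_lt_of_le (by positivity) ht1
  set lam : ℂ := -(((t : ℝ) : ℂ) * ψ) with hlam
  set M : ℝ := ‖T‖^2 + 2*t*c + t^2 with hM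
  -- operator norm bound
  have hpt : ∀ x : H, ‖x‖ = 1 → ‖(T - lam • 1) x‖^2 ≤ M := by
    intro x hx
    have hexp : (T - lam • 1) x = T x + (((t : ℝ) : ℂ) * ψ) • x := by
      simp [hlam, sub_eq_add_neg, neg_smul]
    rw [hexp]
    rw [@norm_add_sq ℂ H _ _ _ (T x) ((((t : ℝ) : ℂ) * ψ) • x)]
    have hip : RCLike.re (⟪T x, (((t : ℝ) : ℂ) * ψ) • x⟫_ℂ) ≤ t * c := by
      rw [inner_smul_right]
      have : ⟪T x, x⟫_ℂ = (starRingEnd ℂ) (⟪x, T x⟫_ℂ) := (inner_conj_symm _ _).symm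
      rw [this, RCLike.re_to_complex]
      have heq : (((t : ℝ) : ℂ) * ψ * (starRingEnd ℂ) (⟪x, T x⟫_ℂ)).re
          = t * g (⟪x, T x⟫_ℂ) := by
        rw [hg]
        rw [mul_assoc, Complex.re_ofReal_mul]
        congr 1
        rw [show ψ * (starRingEnd ℂ) (⟪x, T x⟫_ℂ)
            = (starRingEnd ℂ) ((starRingEnd ℂ) ψ * (⟪x, T x⟫_ℂ)) by
          rw [map_mul, RingHomInvPair.comp_apply_eq]  -- conj conj
          ]
        exact Complex.conj_re _
      rw [heq]
      have := hKle _ (subset_closure ⟨x, hx, rfl⟩)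
      nlinarith
    have hn1 : ‖T x‖^2 ≤ ‖T‖^2 := by
      have h1 : ‖T x‖ ≤ ‖T‖ := by
        have := T.le_opNorm x
        rwa [hx, mul_one] at this
      nlinarith [norm_nonneg (T x)]
    have hn2 : ‖(((t : ℝ) : ℂ) * ψ) • x‖^2 = t^2 := by
      rw [norm_smul, hx, mul_one, norm_mul, Complex.norm_real, Real.norm_eq_abs,
        hψabs, mul_one, abs_of_pos htpos]
    rw [hn2, hM]
    nlinarith
  have hopn : ‖T - lam • 1‖ ≤ Real.sqrt M := by
    apply opNorm_le_bound _ (Real.sqrt_nonneg M)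
    intro x
    rcases eq_or_ne x 0 with rfl | hx0
    · simp
    · have hnx : ‖x‖ ≠ 0 := fun hc => hx0 (norm_eq_zero.mp hc)
      set x' : H := (‖x‖⁻¹ : ℂ) • x with hx'
      have hx'1 : ‖x'‖ = 1 := by
        rw [hx', norm_smul]
        simp [norm_inv, inv_mul_cancel₀ hnx]
      have hb := hpt x' hx'1
      have hb' : ‖(T - lam • 1) x'‖ ≤ Real.sqrt M := by
        rw [show (‖(T - lam • 1) x'‖ : ℝ) = Real.sqrt (‖(T - lam • 1) x'‖^2) by
          rw [Real.sqrt_sq (norm_nonneg _)]]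
        exact Real.sqrt_le_sqrt hb
      have hsc : (T - lam • 1) x = (‖x‖ : ℂ) • ((T - lam • 1) x') := by
        rw [hx', map_smul, smul_smul]
        rw [show ((‖x‖ : ℝ) : ℂ) * ((‖x‖ : ℝ) : ℂ)⁻¹ = 1 by
          rw [mul_inv_cancel₀]
          exact_mod_cast hnx]
        rw [one_smul]
      rw [hsc, norm_smul]
      rw [Complex.norm_real, Real.norm_eq_abs, abs_of_nonneg (norm_nonneg x)]
      rw [mul_comm]
      exact mul_le_mul_of_nonneg_right hb' (norm_nonneg x)
  -- lower bound for |z - lam|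
  have hcc : ψ * (starRingEnd ℂ) ψ = 1 := by
    rw [Complex.mul_conj, Complex.normSq_eq_norm_sq, hψabs]
    norm_num
  have hmulz : ψ * ((starRingEnd ℂ) ψ * z + ((t : ℝ) : ℂ)) = z + ((t : ℝ) : ℂ) * ψ := by
    rw [mul_add, ← mul_assoc, hcc, one_mul]
    ring
  have hfac : z - lam = ψ * ((starRingEnd ℂ) ψ * z + ((t : ℝ) : ℂ)) := by
    rw [hlam, sub_neg_eq_add, hmulz]
  have hlow : g z + t ≤ ‖z - lam‖ := by
    have h1 : g z + t = ((starRingEnd ℂ) ψ * z + ((t : ℝ) : ℂ)).re := by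
      rw [hg]
      simp
    have h2 := Complex.re_le_norm ((starRingEnd ℂ) ψ * z + ((t : ℝ) : ℂ))
    have h3 : ‖ψ * ((starRingEnd ℂ) ψ * z + ((t : ℝ) : ℂ))‖
        = ‖ψ‖ * ‖(starRingEnd ℂ) ψ * z + ((t : ℝ) : ℂ)‖ :=
      norm_mul _ _
    rw [hfac, h3, hψabs, one_mul]
    linarith
  -- contradiction
  have hgt0 : 0 < g z + t := by
    have := neg_abs_le (g z)
    linarith
  have h2tδ : ‖T‖^2 + 1 ≤ 2 * t * δ := by
    have := (div_le_iff₀ (by positivity : (0:ℝ) < 2 * δ)).mp ht2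
    linarith
  have hMlt : Real.sqrt M < g z + t := by
    rw [Real.sqrt_lt' hgt0, hM]
    have hδ' : δ = g z - c := hδ
    nlinarith [sq_nonneg (g z)]
  have hcon := h lam
  linarith [le_trans hcon hopn]


variable [CompleteSpace H]

set_option maxHeartbeats 1000000 in
lemma polar_norm_RV_le (T : H →L[ℂ] H) (P : PolarDecomp T) (lam : ℂ) :
    ‖P.R * P.V - lam • 1‖ ≤ ‖T - lam • 1‖ := by
  set V := P.V with hV
  set R := P.R with hR
  have hRsa : ContinuousLinearMap.adjoint R = R := P.posR.isSelfAdjoint.adjoint_eq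
  have hRinner : ∀ a b : H, ⟪R a, b⟫_ℂ = ⟪a, R b⟫_ℂ := by
    intro a b
    have := adjoint_inner_left R b a
    rwa [hRsa] at this
  -- ker R = ker T
  have hRT : ∀ a : H, (⟪R a, R a⟫_ℂ) = ⟪T a, T a⟫_ℂ := by
    intro a
    have h1 : (⟪R a, R a⟫_ℂ) = ⟪a, (R * R) a⟫_ℂ := by
      rw [hRinner]
      rfl
    have h2 : (⟪a, (adjoint T * T) a⟫_ℂ) = ⟪T a, T a⟫_ℂ := by
      rw [mul_apply_eq_comp, adjoint_inner_right]
    rw [h1, P.sqR, h2]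
  have hkerR : ∀ a : H, T a = 0 → R a = 0 := by
    intro a ha
    have := hRT a
    rw [ha, inner_self_eq_zero.mpr rfl] at this
    exact inner_self_eq_zero.mp this
  have hkerVR : ∀ a : H, V a = 0 → R a = 0 := by
    intro a ha
    have haT : a ∈ LinearMap.ker (T : H →ₗ[ℂ] H) := by
      rw [← P.kerV]
      exact ha
    exact hkerR a haT
  -- V* V R = R
  have hVVR : ∀ y : H, adjoint V (V (R y)) = R y := by
    intro y
    set q : H := R y - adjoint V (V (R y)) with hq
    have hVq : V q = 0 := by
      have := congrFun (congrArg DFunLike.coe P.partIso) (R y)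
      simp only [mul_apply_eq_comp] at this
      rw [hq, map_sub, this]
      simp [V]
    have hq0 : (⟪q, q⟫_ℂ) = 0 := by
      have hterm1 : (⟪R y, q⟫_ℂ) = 0 := by
        rw [hRinner y q]  -- wrong direction? ⟪R y, q⟫ = ⟪y, R q⟫
        rw [hkerVR q hVq]
        exact inner_zero_right _
      have hterm2 : (⟪adjoint V (V (R y)), q⟫_ℂ) = 0 := by
        rw [adjoint_inner_left, hVq, inner_zero_right]
      rw [hq, inner_sub_left, hterm1, hterm2, sub_zero]
    have h0 : q = 0 := inner_self_eq_zero.mp hq0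
    rw [hq, sub_eq_zero] at h0
    exact h0.symm
  -- ‖V‖ ≤ 1
  have hVle : ‖V‖ ≤ 1 := by
    apply opNorm_le_bound _ zero_le_one
    intro x
    rw [one_mul]
    set u : H := adjoint V (V x) with hu
    set w : H := x - u with hw
    have hVw : V w = 0 := by
      have hpi := congrFun (congrArg DFunLike.coe P.partIso) x
      simp only [mul_apply_eq_comp] at hpi
      rw [hw, map_sub, hu, hpi]
      simp [hV]
    have huw : (⟪u, w⟫_ℂ) = 0 := by rw [hu, adjoint_inner_left, hVw, inner_zero_right]
    have hxuw : x = u + w := by rw [hw]; abel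
    have hnx : ‖x‖^2 = ‖u‖^2 + ‖w‖^2 := by
      conv_lhs => rw [hxuw]
      rw [@norm_add_sq ℂ H _ _ _ u w, huw]
      simp
    have hVu : V u = V x := by
      have : V x = V u + V w := by rw [← map_add, ← hxuw]
      rw [this, hVw, add_zero]
    have hVx2 : ‖V x‖^2 = ‖u‖^2 := by
      have h1 : (⟪u, u⟫_ℂ) = ⟪V x, V x⟫_ℂ := by
        conv_lhs => rw [hu]
        rw [adjoint_inner_left, hVu]
      rw [inner_self_eq_norm_sq_to_K, inner_self_eq_norm_sq_to_K] at h1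
      exact_mod_cast h1.symm
    nlinarith [norm_nonneg (V x), norm_nonneg x, norm_nonneg w]
  have hVadj : ‖adjoint V‖ ≤ 1 := by
    calc ‖adjoint V‖ = ‖V‖ := LinearIsometryEquiv.norm_map adjoint V
      _ ≤ 1 := hVle
  -- pointwise estimate
  have hmain : ∀ x : H, ‖(R * V - lam • 1) x‖ ≤ ‖T - lam • 1‖ * ‖x‖ := by
    intro x
    set u : H := adjoint V (V x) with hu
    set w : H := x - u with hw
    have hVw : V w = 0 := by
      have hpi := congrFun (congrArg DFunLike.coe P.partIso) x
      simp only [mul_apply_eq_comp] at hpi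
      rw [hw, map_sub, hu, hpi]
      simp [hV]
    have hTw : T w = 0 := by
      have hmem : w ∈ LinearMap.ker (V : H →ₗ[ℂ] H) := hVw
      rw [P.kerV] at hmem
      exact hmem
    have hRw : R w = 0 := hkerVR w hVw
    have huw : (⟪u, w⟫_ℂ) = 0 := by rw [hu, adjoint_inner_left, hVw, inner_zero_right]
    have hxuw : x = u + w := by rw [hw]; abel
    have hnx : ‖x‖^2 = ‖u‖^2 + ‖w‖^2 := by
      conv_lhs => rw [hxuw]
      rw [@norm_add_sq ℂ H _ _ _ u w, huw]
      simp
    have hVu : V u = V x := by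
      have : V x = V u + V w := by rw [← map_add, ← hxuw]
      rw [this, hVw, add_zero]
    have hVx : ‖V x‖ = ‖u‖ := by
      have h1 : (⟪u, u⟫_ℂ) = ⟪V x, V x⟫_ℂ := by
        conv_lhs => rw [hu]
        rw [adjoint_inner_left, hVu]
      rw [inner_self_eq_norm_sq_to_K, inner_self_eq_norm_sq_to_K] at h1
      have h2 : ‖u‖^2 = ‖V x‖^2 := by exact_mod_cast h1
      rw [← Real.sqrt_sq (norm_nonneg (V x)), ← Real.sqrt_sq (norm_nonneg u), h2]
    have hA : R (V x) - lam • u = adjoint V ((T - lam • 1) (V x)) := by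
      have h1 : (T - lam • 1) (V x) = T (V x) - lam • (V x) := by
        simp [sub_apply, smul_apply, one_apply]
      have h2 : T (V x) = V (R (V x)) := by
        rw [P.factor]
        rfl
      rw [h1, map_sub, map_smul, h2, hVVR (V x), ← hu]
    have hAnorm : ‖R (V x) - lam • u‖ ≤ ‖T - lam • 1‖ * ‖u‖ := by
      rw [hA]
      calc ‖adjoint V ((T - lam • 1) (V x))‖
          ≤ ‖adjoint V‖ * ‖(T - lam • 1) (V x)‖ := le_opNorm _ _
        _ ≤ 1 * (‖T - lam • 1‖ * ‖V x‖) := by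
            apply mul_le_mul hVadj (le_opNorm _ _) (norm_nonneg _) zero_le_one
        _ = ‖T - lam • 1‖ * ‖u‖ := by rw [one_mul, hVx]
    have hB : (R * V - lam • 1) x = (R (V x) - lam • u) + (-lam) • w := by
      simp only [sub_apply, mul_apply_eq_comp, smul_apply, one_apply_eq_self]
      rw [hw]
      module
    have hperp : (⟪R (V x) - lam • u, (-lam) • w⟫_ℂ) = 0 := by
      rw [inner_smul_right, inner_sub_left, inner_smul_left, hRinner (V x) w, hRw,
        inner_zero_right, huw]
      simp
    have hsq : ‖(R * V - lam • 1) x‖^2 = ‖R (V x) - lam • u‖^2 + ‖(-lam) • w‖^2 := by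
      rw [hB, @norm_add_sq ℂ H _ _ _ _ _, hperp]
      simp
    have hlamw : ‖(-lam) • w‖ ≤ ‖T - lam • 1‖ * ‖w‖ := by
      have h3 : (T - lam • 1) w = (-lam) • w := by
        simp [sub_apply, smul_apply, one_apply, hTw]
      rw [← h3]
      exact le_opNorm _ _
    have hnn1 : (0:ℝ) ≤ ‖T - lam • 1‖ := norm_nonneg _
    have e1 : ‖R (V x) - lam • u‖^2 ≤ (‖T - lam • 1‖ * ‖u‖)^2 :=
      pow_le_pow_left₀ (norm_nonneg _) hAnorm 2
    have e2 : ‖(-lam) • w‖^2 ≤ (‖T - lam • 1‖ * ‖w‖)^2 :=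
      pow_le_pow_left₀ (norm_nonneg _) hlamw 2
    have e4 : ‖T - lam • 1‖^2 * ‖x‖^2 = ‖T - lam • 1‖^2 * ‖u‖^2 + ‖T - lam • 1‖^2 * ‖w‖^2 := by
      rw [hnx]
      ring
    have e3 : ‖(R * V - lam • 1) x‖^2 ≤ (‖T - lam • 1‖ * ‖x‖)^2 := by
      rw [hsq]
      nlinarith [e1, e2, e4]
    nlinarith [e3, norm_nonneg ((R * V - lam • 1) x), mul_nonneg hnn1 (norm_nonneg x)]
  exact opNorm_le_bound _ (norm_nonneg _) hmain

set_option maxHeartbeats 1000000 in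
lemma polar_norm_mean_le (T : H →L[ℂ] H) (P : PolarDecomp T) (lam : ℂ) :
    ‖P.mean - lam • 1‖ ≤ ‖T - lam • 1‖ := by
  have hfac : P.mean - lam • 1 = (2⁻¹ : ℂ) • ((T - lam • 1) + (P.R * P.V - lam • 1)) := by
    rw [PolarDecomp.mean, ← P.factor]
    module
  rw [hfac, norm_smul]
  have h1 : ‖(2⁻¹ : ℂ)‖ = 2⁻¹ := by
    rw [norm_inv]
    norm_num
  rw [h1]
  have h2 := norm_add_le (T - lam • 1) (P.R * P.V - lam • 1)
  have h3 := polar_norm_RV_le T P lam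
  linarith

end Aux

theorem mean_transform_numerical_range {H : Type*} [NormedAddCommGroup H]
    [InnerProductSpace ℂ H] [CompleteSpace H] (T : H →L[ℂ] H) (P : PolarDecomp T) :
    closure (numRange P.mean) ⊆ closure (numRange T) ∧
      sSup ((fun z : ℂ => ‖z‖) '' numRange P.mean) ≤ sSup ((fun z : ℂ => ‖z‖) '' numRange T) := by
  have hsub : numRange P.mean ⊆ closure (numRange T) := by
    intro z hz
    apply mem_closure_of_disks
    intro l
    exact le_trans (numRange_disk P.mean hz l) (polar_norm_mean_le T P l)
  refine ⟨closure_minimal hsub isClosed_closure, ?_⟩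
  rcases (numRange P.mean).eq_empty_or_nonempty with he | hne
  · have hTe : numRange T = ∅ := by
      rw [Set.eq_empty_iff_forall_notMem]
      rintro z ⟨x, hx, hz⟩
      rw [Set.eq_empty_iff_forall_notMem] at he
      exact he _ ⟨x, hx, rfl⟩
    rw [he, hTe]
  · obtain ⟨z₀, x₀, hx₀, hz₀⟩ := hne
    have hTne : (numRange T).Nonempty := ⟨_, x₀, hx₀, rfl⟩
    have hbdd : BddAbove ((fun z : ℂ => ‖z‖) '' numRange T) := by
      refine ⟨‖T‖, ?_⟩
      rintro r ⟨v, hv, rfl⟩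
      exact abs_numRange_le T hv
    set M : ℝ := sSup ((fun z : ℂ => ‖z‖) '' numRange T) with hM
    have hM0 : 0 ≤ M := by
      obtain ⟨v, hv⟩ := hTne
      exact le_trans (norm_nonneg v) (le_csSup hbdd ⟨v, hv, rfl⟩)
    apply Real.sSup_le _ hM0
    rintro r ⟨w, hw, rfl⟩
    have hwcl : w ∈ closure (numRange T) := hsub hw
    have h1 : ‖w‖ ∈ closure ((fun z : ℂ => ‖z‖) '' numRange T) := by
      have := image_closure_subset_closure_image (f := fun v : ℂ => ‖v‖)
        (s := numRange T) continuous_norm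
      exact this ⟨w, hwcl, rfl⟩
    have h2 : closure ((fun z : ℂ => ‖z‖) '' numRange T) ⊆ Set.Iic M := by
      apply closure_minimal _ isClosed_Iic
      rintro r ⟨v, hv, rfl⟩
      exact le_csSup hbdd ⟨v, hv, rfl⟩
    exact h2 h1
end
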